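/- arXiv:2112.04097 — 4 statements merged into one kernel-verified Lean document; each statement's English description precedes it below -/
import Mathlib

section
/- A strongly connected finite digraph D has exactly three complementarity eigenvalues if and only if every induced strongly connected proper subdigraph of D is either an isolated vertex or a directed cycle, and D itself is neither a cycle nor a single vertex. -/
open Matrix
open scoped Classical

noncomputable section

/-- Adjacency matrix of a digraph given by an arc relation `E`. -/
def adjMat {V : Type*} (E : V → V → Prop) : Matrix V V ℝ :=
  Matrix.of fun i j => if E i j then (1 : ℝ) else 0

/-- Spectral radius of a real square matrix: the largest modulus of a (complex) eigenvalue. -/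
def matSpecRad {n : Type*} [Fintype n] (A : Matrix n n ℝ) : ℝ :=
  sSup {r : ℝ | ∃ μ ∈ spectrum ℂ (A.map (fun x => (x : ℂ))), r = ‖μ‖}

/-- Spectral radius of a digraph. -/
def rho {V : Type*} [Fintype V] (E : V → V → Prop) : ℝ :=
  matSpecRad (adjMat E)

/-- The complementarity spectrum of a real square matrix. -/
def compSpec {n : Type*} [Fintype n] (A : Matrix n n ℝ) : Set ℝ :=
  {lam | ∃ x : n → ℝ, x ≠ 0 ∧ 0 ≤ x ∧ 0 ≤ A.mulVec x - lam • x ∧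
    x ⬝ᵥ (A.mulVec x - lam • x) = 0}

/-- Reachability by directed paths. -/
def Reach {V : Type*} (E : V → V → Prop) : V → V → Prop :=
  Relation.ReflTransGen E

/-- A digraph is strongly connected if every vertex reaches every other one. -/
def StronglyConnected {V : Type*} (E : V → V → Prop) : Prop :=
  ∀ u v, Reach E u v

/-- Induced subdigraph on a vertex subset `S`. -/
def induceRel {V : Type*} (E : V → V → Prop) (S : Set V) : S → S → Prop :=
  fun a b => E a.1 b.1

/-- Spectral radius of the induced subdigraph on `S`. -/
def specRadOn {V : Type*} [Fintype V] (E : V → V → Prop) (S : Set V) : ℝ :=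
  @rho S (Set.Finite.fintype S.toFinite) (induceRel E S)

/-- Complementarity spectrum of the induced subdigraph on `S`. -/
def compSpecOn {V : Type*} [Fintype V] (E : V → V → Prop) (S : Set V) : Set ℝ :=
  @compSpec S (Set.Finite.fintype S.toFinite) (adjMat (induceRel E S))

/-- Isomorphism of digraphs. -/
def IsoDigraph {V W : Type*} (E : V → V → Prop) (F : W → W → Prop) : Prop :=
  ∃ e : V ≃ W, ∀ a b, E a b ↔ F (e a) (e b)

/-- The directed cycle on `n` vertices. -/
def cycleRel (n : ℕ) : ZMod n → ZMod n → Prop := fun i j => j = i + 1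

/-- A digraph is a directed cycle if it is isomorphic to some `C⃗_n`, `n ≥ 2`. -/
def IsCycleDigraph {V : Type*} (E : V → V → Prop) : Prop :=
  ∃ n : ℕ, 2 ≤ n ∧ IsoDigraph E (cycleRel n)

/-- A digraph is acyclic if it has no directed cycle. -/
def Acyclic {V : Type*} (E : V → V → Prop) : Prop :=
  ∀ v, ¬ Relation.TransGen E v v

/-- Strongly connected component of the vertex `v`. -/
def component {V : Type*} (E : V → V → Prop) (v : V) : Set V :=
  {u | Reach E u v ∧ Reach E v u}

/-- `D` has an `∞(r,s)`-subdigraph: two directed cycles of lengths `r` and `s`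
sharing exactly one vertex, all of whose arcs are arcs of `D`. -/
def InftySub {V : Type*} (E : V → V → Prop) (r s : ℕ) : Prop :=
  ∃ (f : ZMod r → V) (g : ZMod s → V),
    Function.Injective f ∧ Function.Injective g ∧ f 0 = g 0 ∧
    Set.range f ∩ Set.range g = {f 0} ∧
    (∀ i, E (f i) (f (i + 1))) ∧ (∀ j, E (g j) (g (j + 1)))

/-- `D` has a `θ(a,b,c)`-subdigraph: three internally disjoint directed paths,
two from `v` to `w` (of lengths `a+1` and `b+1`) and one from `w` to `v`
(of length `c+1`), all of whose arcs are arcs of `D`. -/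
def ThetaSub {V : Type*} (E : V → V → Prop) (a b c : ℕ) : Prop :=
  ∃ (P : Fin (a + 2) → V) (Q : Fin (b + 2) → V) (R : Fin (c + 2) → V),
    Function.Injective P ∧ Function.Injective Q ∧ Function.Injective R ∧
    P 0 = Q 0 ∧ Q 0 = R (Fin.last (c + 1)) ∧
    P (Fin.last (a + 1)) = Q (Fin.last (b + 1)) ∧ Q (Fin.last (b + 1)) = R 0 ∧
    (∀ i j, P i = Q j → (i = 0 ∧ j = 0) ∨ (i = Fin.last (a + 1) ∧ j = Fin.last (b + 1))) ∧
    (∀ i j, P i = R j → (i = 0 ∧ j = Fin.last (c + 1)) ∨ (i = Fin.last (a + 1) ∧ j = 0)) ∧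
    (∀ i j, Q i = R j → (i = 0 ∧ j = Fin.last (c + 1)) ∨ (i = Fin.last (b + 1) ∧ j = 0)) ∧
    (∀ i : Fin (a + 1), E (P i.castSucc) (P i.succ)) ∧
    (∀ i : Fin (b + 1), E (Q i.castSucc) (Q i.succ)) ∧
    (∀ i : Fin (c + 1), E (R i.castSucc) (R i.succ))

/-- `D` is (isomorphic to) the `∞(r,s)` digraph: the coalescence of the directed
cycles `C⃗_r` and `C⃗_s` at one vertex, with no further vertices or arcs. -/
def IsInftyDigraph {V : Type*} (E : V → V → Prop) (r s : ℕ) : Prop :=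
  ∃ (f : ZMod r → V) (g : ZMod s → V),
    Function.Injective f ∧ Function.Injective g ∧ f 0 = g 0 ∧
    Set.range f ∩ Set.range g = {f 0} ∧
    Set.range f ∪ Set.range g = Set.univ ∧
    ∀ u v, E u v ↔ ((∃ i, u = f i ∧ v = f (i + 1)) ∨ (∃ j, u = g j ∧ v = g (j + 1)))

/-- `D` is (isomorphic to) the `θ(a,b,c)` digraph: three internally disjoint
directed paths, two from `v` to `w` and one from `w` to `v`, with no further
vertices or arcs. -/
def IsThetaDigraph {V : Type*} (E : V → V → Prop) (a b c : ℕ) : Prop :=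
  ∃ (P : Fin (a + 2) → V) (Q : Fin (b + 2) → V) (R : Fin (c + 2) → V),
    Function.Injective P ∧ Function.Injective Q ∧ Function.Injective R ∧
    P 0 = Q 0 ∧ Q 0 = R (Fin.last (c + 1)) ∧
    P (Fin.last (a + 1)) = Q (Fin.last (b + 1)) ∧ Q (Fin.last (b + 1)) = R 0 ∧
    (∀ i j, P i = Q j → (i = 0 ∧ j = 0) ∨ (i = Fin.last (a + 1) ∧ j = Fin.last (b + 1))) ∧
    (∀ i j, P i = R j → (i = 0 ∧ j = Fin.last (c + 1)) ∨ (i = Fin.last (a + 1) ∧ j = 0)) ∧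
    (∀ i j, Q i = R j → (i = 0 ∧ j = Fin.last (c + 1)) ∨ (i = Fin.last (b + 1) ∧ j = 0)) ∧
    Set.range P ∪ Set.range Q ∪ Set.range R = Set.univ ∧
    (∀ u v, E u v ↔
      ((∃ i : Fin (a + 1), u = P i.castSucc ∧ v = P i.succ) ∨
       (∃ i : Fin (b + 1), u = Q i.castSucc ∧ v = Q i.succ) ∨
       (∃ i : Fin (c + 1), u = R i.castSucc ∧ v = R i.succ)))

section Aux
set_option linter.unusedSectionVars false

variable {V : Type*} [Fintype V] (E : V → V → Prop)

/-- One arc-step inside a vertex set `S`. -/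
def stepRel (S : Set V) : V → V → Prop := fun a b => a ∈ S ∧ b ∈ S ∧ E a b

/-- Reachability staying inside `S`. -/
def ReachIn (S : Set V) : V → V → Prop := Relation.ReflTransGen (stepRel E S)

/-- Strong connectivity of the induced subdigraph on `S`, phrased inside `V`. -/
def SCOn (S : Set V) : Prop := ∀ u ∈ S, ∀ v ∈ S, ReachIn E S u v

variable {E}

lemma adjMat_apply (i j : V) : adjMat E i j = if E i j then (1:ℝ) else 0 := rfl

lemma adjMat_nonneg (i j : V) : 0 ≤ adjMat E i j := by
  rw [adjMat_apply]; split <;> norm_num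

lemma adjMat_le_one (i j : V) : adjMat E i j ≤ 1 := by
  rw [adjMat_apply]; split <;> norm_num

lemma adjMat_pos_iff {i j : V} : 0 < adjMat E i j ↔ E i j := by
  rw [adjMat_apply]; split <;> simp_all

lemma mulVec_apply (x : V → ℝ) (i : V) :
    (adjMat E).mulVec x i = ∑ j, adjMat E i j * x j := rfl

lemma mulVec_nonneg {x : V → ℝ} (hx : ∀ j, 0 ≤ x j) (i : V) :
    0 ≤ (adjMat E).mulVec x i := by
  rw [_root_.mulVec_apply]
  exact Finset.sum_nonneg fun j _ => mul_nonneg (adjMat_nonneg _ _) (hx j)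

lemma mulVec_mono {x y : V → ℝ} (hxy : ∀ j, x j ≤ y j) (i : V) :
    (adjMat E).mulVec x i ≤ (adjMat E).mulVec y i := by
  rw [_root_.mulVec_apply, _root_.mulVec_apply]
  exact Finset.sum_le_sum fun j _ => mul_le_mul_of_nonneg_left (hxy j) (adjMat_nonneg _ _)

/-- An "eigen-pair" supported exactly on `S`, with the eigen-equation on `S`. -/
def EigOn (E : V → V → Prop) (S : Set V) (lam : ℝ) : Prop :=
  ∃ x : V → ℝ, (∀ i, 0 ≤ x i) ∧ (∀ i, 0 < x i ↔ i ∈ S) ∧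
    ∀ i ∈ S, (adjMat E).mulVec x i = lam * x i

lemma mem_compSpec_iff {lam : ℝ} :
    lam ∈ compSpec (adjMat E) ↔ ∃ S : Set V, S.Nonempty ∧ EigOn E S lam := by
  constructor
  · rintro ⟨x, hx0, hxnn, hge, hdot⟩
    have hxnn' : ∀ i, 0 ≤ x i := fun i => hxnn i
    have hge' : ∀ i, lam * x i ≤ (adjMat E).mulVec x i := by
      intro i
      have := hge i
      simp only [Pi.zero_apply, Pi.sub_apply, Pi.smul_apply, smul_eq_mul] at this
      linarith
    have hterm : ∀ i, x i * ((adjMat E).mulVec x i - lam * x i) = 0 := by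
      have hsum : ∑ i, x i * ((adjMat E).mulVec x i - lam * x i) = 0 := by
        rw [← hdot]
        simp [dotProduct, Pi.sub_apply, Pi.smul_apply, smul_eq_mul]
      intro i
      have hnn : ∀ j ∈ Finset.univ, 0 ≤ x j * ((adjMat E).mulVec x j - lam * x j) :=
        fun j _ => mul_nonneg (hxnn' j) (by linarith [hge' j])
      have := (Finset.sum_eq_zero_iff_of_nonneg hnn).mp hsum i (Finset.mem_univ i)
      exact this
    refine ⟨{i | 0 < x i}, ?_, x, hxnn', fun i => Iff.rfl, ?_⟩
    · obtain ⟨i, hi⟩ := Function.ne_iff.mp hx0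
      exact ⟨i, lt_of_le_of_ne (hxnn' i) (Ne.symm hi)⟩
    · intro i hi
      have := hterm i
      rcases mul_eq_zero.mp this with h | h
      · exact absurd h (ne_of_gt hi)
      · linarith
  · rintro ⟨S, ⟨s0, hs0⟩, x, hxnn, hsupp, heq⟩
    refine ⟨x, ?_, fun i => hxnn i, ?_, ?_⟩
    · intro h0
      have : x s0 = 0 := by rw [h0]; rfl
      have := (hsupp s0).mpr hs0
      linarith
    · intro i
      simp only [Pi.zero_apply, Pi.sub_apply, Pi.smul_apply, smul_eq_mul]
      by_cases hi : i ∈ S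
      · rw [heq i hi]; linarith
      · have hxi : x i = 0 := by
          rcases lt_or_eq_of_le (hxnn i) with h | h
          · exact absurd ((hsupp i).mp h) hi
          · exact h.symm
        rw [hxi, mul_zero, sub_zero]
        exact mulVec_nonneg hxnn i
    · rw [dotProduct]
      apply Finset.sum_eq_zero
      intro i _
      simp only [Pi.sub_apply, Pi.smul_apply, smul_eq_mul]
      by_cases hi : i ∈ S
      · rw [heq i hi]; ring
      · have hxi : x i = 0 := by
          rcases lt_or_eq_of_le (hxnn i) with h | h
          · exact absurd ((hsupp i).mp h) hi
          · exact h.symm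
        rw [hxi]; ring

end Aux
section Aux2
set_option linter.unusedSectionVars false
variable {V : Type*} [Fintype V] {E : V → V → Prop}

lemma mulVec_const_smul (t : ℝ) (y : V → ℝ) (i : V) :
    (adjMat E).mulVec (fun j => t * y j) i = t * (adjMat E).mulVec y i := by
  simp [_root_.mulVec_apply, Finset.mul_sum, mul_left_comm]

lemma reachIn_of_closed {S C : Set V} (hclosed : ∀ i ∈ C, ∀ j ∈ S, E i j → j ∈ C)
    {u v : V} (h : ReachIn E S u v) (hu : u ∈ C) : ReachIn E C u v ∧ v ∈ C := by
  induction h with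
  | refl => exact ⟨Relation.ReflTransGen.refl, hu⟩
  | tail h1 h2 ih =>
      have hc := hclosed _ ih.2 _ h2.2.1 h2.2.2
      exact ⟨ih.1.tail ⟨ih.2, hc, h2.2.2⟩, hc⟩

section CW
variable {T : Set V} {mu lam : ℝ} {y x : V → ℝ}
  (hynn : ∀ i, 0 ≤ y i) (hysupp : ∀ i, 0 < y i ↔ i ∈ T)
  (hyeq : ∀ i ∈ T, (adjMat E).mulVec y i = mu * y i)
  (hxnn : ∀ i, 0 ≤ x i) (hxne : ∃ i, 0 < x i)
  (hxsupp : ∀ i, 0 < x i → i ∈ T)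
  (hxge : ∀ i ∈ T, lam * x i ≤ (adjMat E).mulVec x i)

include hynn hysupp hyeq hxnn hxne hxsupp hxge

private lemma cw_core :
    ∃ i0 ∈ T, 0 < x i0 ∧ x i0 = (x i0 / y i0) * y i0 ∧
      (∀ j, x j ≤ (x i0 / y i0) * y j) ∧ 0 < x i0 / y i0 := by
  classical
  set g : V → ℝ := fun i => x i / y i with hg
  have hFne : (Finset.univ.filter (fun i => i ∈ T)).Nonempty := by
    obtain ⟨i, hi⟩ := hxne
    exact ⟨i, by simp [hxsupp i hi]⟩
  obtain ⟨i0, hi0F, hmax⟩ := Finset.exists_max_image _ g hFne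
  have hi0T : i0 ∈ T := by simpa using hi0F
  obtain ⟨iw, hiw⟩ := hxne
  have hiwT : iw ∈ T := hxsupp iw hiw
  have hyiw : 0 < y iw := (hysupp iw).mpr hiwT
  have htpos : 0 < g i0 :=
    lt_of_lt_of_le (div_pos hiw hyiw) (hmax iw (by simp [hiwT]))
  have hyi0 : 0 < y i0 := (hysupp i0).mpr hi0T
  have hxi0 : 0 < x i0 := by
    have := htpos
    rw [hg] at this
    simp only at this
    nlinarith [div_mul_cancel₀ (x i0) (ne_of_gt hyi0)]
  refine ⟨i0, hi0T, hxi0, (div_mul_cancel₀ (x i0) (ne_of_gt hyi0)).symm, ?_, htpos⟩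
  intro j
  by_cases hj : j ∈ T
  · have hyj : 0 < y j := (hysupp j).mpr hj
    have := hmax j (by simp [hj])
    calc x j = (x j / y j) * y j := (div_mul_cancel₀ _ (ne_of_gt hyj)).symm
    _ ≤ g i0 * y j := by
        exact mul_le_mul_of_nonneg_right this (le_of_lt hyj)
  · have hxj : x j = 0 := by
      rcases lt_or_eq_of_le (hxnn j) with h | h
      · exact absurd (hxsupp j h) hj
      · exact h.symm
    rw [hxj]
    exact mul_nonneg (le_of_lt htpos) (hynn j)

lemma cw_le : lam ≤ mu := by
  obtain ⟨i0, hi0T, hxi0, hxi0eq, hle, htpos⟩ :=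
    cw_core hynn hysupp hyeq hxnn hxne hxsupp hxge
  set t := x i0 / y i0
  have h1 : lam * x i0 ≤ (adjMat E).mulVec x i0 := hxge i0 hi0T
  have h2 : (adjMat E).mulVec x i0 ≤ (adjMat E).mulVec (fun j => t * y j) i0 :=
    mulVec_mono hle i0
  have h3 : (adjMat E).mulVec (fun j => t * y j) i0 = t * (mu * y i0) := by
    rw [mulVec_const_smul, hyeq i0 hi0T]
  have : lam * x i0 ≤ mu * x i0 := by
    calc lam * x i0 ≤ t * (mu * y i0) := by linarith
    _ = mu * (t * y i0) := by ring
    _ = mu * x i0 := by rw [← hxi0eq]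
  exact le_of_mul_le_mul_right (by linarith [this]) hxi0

lemma cw_eq_support (hT : SCOn E T) (heq : lam = mu) : ∀ v ∈ T, 0 < x v := by
  obtain ⟨i0, hi0T, hxi0, hxi0eq, hle, htpos⟩ :=
    cw_core hynn hysupp hyeq hxnn hxne hxsupp hxge
  set t := x i0 / y i0 with ht
  set U : Set V := {i | i ∈ T ∧ x i = t * y i} with hU
  have hclosed : ∀ i ∈ U, ∀ j ∈ T, E i j → j ∈ U := by
    rintro i ⟨hiT, hieq⟩ j hjT hij
    -- equality chain at i
    have h1 : lam * x i ≤ (adjMat E).mulVec x i := hxge i hiT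
    have h2 : (adjMat E).mulVec x i ≤ (adjMat E).mulVec (fun j => t * y j) i :=
      mulVec_mono hle i
    have h3 : (adjMat E).mulVec (fun j => t * y j) i = t * (mu * y i) := by
      rw [mulVec_const_smul, hyeq i hiT]
    have hchain : lam * x i = t * (mu * y i) := by
      rw [heq, hieq]; ring
    have hAeq : (adjMat E).mulVec x i = (adjMat E).mulVec (fun j => t * y j) i := by
      rw [h3]; rw [h3] at h2; linarith [hchain ▸ h1]
    -- so each term is tight
    have hsum0 : ∑ k, adjMat E i k * (t * y k - x k) = 0 := by
      have : ∑ k, adjMat E i k * (t * y k) - ∑ k, adjMat E i k * x k = 0 := by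
        have := hAeq
        rw [_root_.mulVec_apply, _root_.mulVec_apply] at this
        linarith
      rw [← this, ← Finset.sum_sub_distrib]
      congr 1; funext k; ring
    have hterm : ∀ k ∈ Finset.univ, adjMat E i k * (t * y k - x k) = 0 := by
      apply (Finset.sum_eq_zero_iff_of_nonneg _).mp hsum0
      intro k _
      exact mul_nonneg (adjMat_nonneg _ _) (by linarith [hle k])
    have := hterm j (Finset.mem_univ j)
    have hAij : adjMat E i j = 1 := by rw [adjMat_apply, if_pos hij]
    rw [hAij, one_mul, sub_eq_zero] at this
    exact ⟨hjT, this.symm⟩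
  intro v hvT
  have hreach : ReachIn E T i0 v := hT i0 hi0T v hvT
  have hi0U : i0 ∈ U := ⟨hi0T, by rw [← hxi0eq]⟩
  have hvU : v ∈ U := (reachIn_of_closed hclosed hreach hi0U).2
  have : x v = t * y v := hvU.2
  rw [this]
  exact mul_pos htpos ((hysupp v).mpr hvT)

end CW

lemma eigOn_unique {T : Set V} {lam mu : ℝ} (hT : T.Nonempty)
    (h1 : EigOn E T lam) (h2 : EigOn E T mu) : lam = mu := by
  obtain ⟨x, hxnn, hxsupp, hxeq⟩ := h1
  obtain ⟨y, hynn, hysupp, hyeq⟩ := h2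
  obtain ⟨t0, ht0⟩ := hT
  have hxne : ∃ i, 0 < x i := ⟨t0, (hxsupp t0).mpr ht0⟩
  have hyne : ∃ i, 0 < y i := ⟨t0, (hysupp t0).mpr ht0⟩
  have hle : lam ≤ mu :=
    cw_le hynn hysupp hyeq hxnn hxne (fun i hi => (hxsupp i).mp hi)
      (fun i hi => le_of_eq (hxeq i hi).symm)
  have hge : mu ≤ lam :=
    cw_le hxnn hxsupp hxeq hynn hyne (fun i hi => (hysupp i).mp hi)
      (fun i hi => le_of_eq (hyeq i hi).symm)
  linarith

lemma eigOn_lt {S T : Set V} {lam mu : ℝ} (hS : S.Nonempty) (hST : S ⊆ T) (hSne : S ≠ T)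
    (hT : SCOn E T) (h1 : EigOn E S lam) (h2 : EigOn E T mu) : lam < mu := by
  obtain ⟨x, hxnn, hxsupp, hxeq⟩ := h1
  obtain ⟨y, hynn, hysupp, hyeq⟩ := h2
  obtain ⟨s0, hs0⟩ := hS
  have hxne : ∃ i, 0 < x i := ⟨s0, (hxsupp s0).mpr hs0⟩
  have hxsupp' : ∀ i, 0 < x i → i ∈ T := fun i hi => hST ((hxsupp i).mp hi)
  have hxge : ∀ i ∈ T, lam * x i ≤ (adjMat E).mulVec x i := by
    intro i hiT
    by_cases hiS : i ∈ S
    · exact le_of_eq (hxeq i hiS).symm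
    · have hxi : x i = 0 := by
        rcases lt_or_eq_of_le (hxnn i) with h | h
        · exact absurd ((hxsupp i).mp h) hiS
        · exact h.symm
      rw [hxi, mul_zero]
      exact mulVec_nonneg hxnn i
  have hle : lam ≤ mu := cw_le hynn hysupp hyeq hxnn hxne hxsupp' hxge
  rcases lt_or_eq_of_le hle with h | h
  · exact h
  · exfalso
    have hsupp := cw_eq_support hynn hysupp hyeq hxnn hxne hxsupp' hxge hT h
    apply hSne
    apply Set.Subset.antisymm hST
    intro v hvT
    exact (hxsupp v).mp (hsupp v hvT)

end Aux2
section Aux3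
set_option linter.unusedSectionVars false
variable {V : Type*} [Fintype V] {E : V → V → Prop}

lemma eigOn_scc {S : Set V} {lam : ℝ} (hS : S.Nonempty) (h : EigOn E S lam) :
    ∃ C : Set V, C.Nonempty ∧ C ⊆ S ∧ SCOn E C ∧ EigOn E C lam := by
  classical
  obtain ⟨x, hxnn, hxsupp, hxeq⟩ := h
  set R : V → Set V := fun i => {j | j ∈ S ∧ ReachIn E S i j} with hR
  have hFne : (Finset.univ.filter (fun i => i ∈ S)).Nonempty := by
    obtain ⟨s, hs⟩ := hS; exact ⟨s, by simp [hs]⟩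
  obtain ⟨i0, hi0F, hmin⟩ :=
    Finset.exists_min_image _ (fun i => (R i).ncard) hFne
  have hi0S : i0 ∈ S := by simpa using hi0F
  set C := R i0 with hC
  have hCsub : C ⊆ S := fun j hj => hj.1
  have hi0C : i0 ∈ C := ⟨hi0S, Relation.ReflTransGen.refl⟩
  have hclosed : ∀ i ∈ C, ∀ j ∈ S, E i j → j ∈ C := by
    rintro i ⟨hiS, hreach⟩ j hjS hij
    exact ⟨hjS, hreach.tail ⟨hiS, hjS, hij⟩⟩
  have hRC : ∀ u ∈ C, R u = C := by
    rintro u ⟨huS, hu⟩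
    have hsub : R u ⊆ C := by
      rintro j ⟨hjS, hj⟩
      exact ⟨hjS, hu.trans hj⟩
    have hle : (R i0).ncard ≤ (R u).ncard := hmin u (by simp [huS])
    exact Set.eq_of_subset_of_ncard_le hsub hle (Set.toFinite _)
  have hSC : SCOn E C := by
    intro u hu v hv
    have hvRu : v ∈ R u := by rw [hRC u hu]; exact hv
    exact (reachIn_of_closed hclosed hvRu.2 hu).1
  set x' : V → ℝ := fun i => if i ∈ C then x i else 0 with hx'
  have hx'nn : ∀ i, 0 ≤ x' i := by
    intro i; simp only [hx']
    split
    · exact hxnn i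
    · exact le_refl 0
  refine ⟨C, ⟨i0, hi0C⟩, hCsub, hSC, x', hx'nn, ?_, ?_⟩
  · intro i
    simp only [hx']
    split
    · next hiC => simp only [hiC, iff_true]; exact (hxsupp i).mpr (hCsub hiC)
    · next hiC => simp [hiC]
  · intro i hiC
    have hsame : (adjMat E).mulVec x' i = (adjMat E).mulVec x i := by
      rw [_root_.mulVec_apply, _root_.mulVec_apply]
      apply Finset.sum_congr rfl
      intro j _
      simp only [hx']
      split
      · rfl
      · next hjC =>
        rcases eq_or_lt_of_le (hxnn j) with h0 | h0
        · rw [← h0]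
        · by_cases hE : E i j
          · exact absurd (hclosed i hiC j ((hxsupp j).mp h0) hE) hjC
          · rw [adjMat_apply, if_neg hE]; ring
    rw [hsame, hxeq i (hCsub hiC)]
    simp only [hx', if_pos hiC]

end Aux3
section Aux4
set_option linter.unusedSectionVars false
set_option maxHeartbeats 1000000
variable {V : Type*} [Fintype V] {E : V → V → Prop}

/-- Feasible pairs for the Collatz–Wielandt sup on `S`. -/
def Feas (E : V → V → Prop) (S : Set V) (lam : ℝ) (x : V → ℝ) : Prop :=
  (∀ i, 0 ≤ x i) ∧ (∀ i, i ∉ S → x i = 0) ∧ (∑ i, x i = 1) ∧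
    ∀ i ∈ S, lam * x i ≤ (adjMat E).mulVec x i

lemma feas_pos_exists {S : Set V} {lam : ℝ} {x : V → ℝ} (hx : Feas E S lam x) :
    ∃ i, 0 < x i ∧ i ∈ S := by
  by_contra hcon
  push_neg at hcon
  have hzero : ∀ i, x i = 0 := by
    intro i
    rcases lt_or_eq_of_le (hx.1 i) with h | h
    · by_cases hiS : i ∈ S
      · exact absurd hiS (hcon i h)
      · exact hx.2.1 i hiS
    · exact h.symm
  have := hx.2.2.1
  simp [hzero] at this

lemma feas_bound {S : Set V} {lam : ℝ} {x : V → ℝ} (hlam : 0 ≤ lam) (hx : Feas E S lam x) :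
    lam ≤ (Fintype.card V : ℝ) := by
  obtain ⟨iw, hiw, hiwS⟩ := feas_pos_exists hx
  obtain ⟨i, _, hmax⟩ := Finset.exists_max_image Finset.univ x ⟨iw, Finset.mem_univ iw⟩
  have hxi : 0 < x i := lt_of_lt_of_le hiw (hmax iw (Finset.mem_univ iw))
  have hiS : i ∈ S := by
    by_contra h
    rw [hx.2.1 i h] at hxi
    exact lt_irrefl 0 hxi
  have h1 : lam * x i ≤ (adjMat E).mulVec x i := hx.2.2.2 i hiS
  have h2 : (adjMat E).mulVec x i ≤ (Fintype.card V : ℝ) * x i := by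
    rw [_root_.mulVec_apply]
    calc ∑ j, adjMat E i j * x j ≤ ∑ _j : V, x i := by
          apply Finset.sum_le_sum
          intro j _
          calc adjMat E i j * x j ≤ 1 * x i :=
                mul_le_mul (adjMat_le_one _ _) (hmax j (Finset.mem_univ j)) (hx.1 j)
                  zero_le_one
          _ = x i := one_mul _
    _ = (Fintype.card V : ℝ) * x i := by
          rw [Finset.sum_const, Finset.card_univ, nsmul_eq_mul]
  exact le_of_mul_le_mul_right (le_trans h1 h2) hxi

/-- The feasible region as a subset of `ℝ × (V → ℝ)`. -/
def KSet (E : V → V → Prop) (S : Set V) : Set (ℝ × (V → ℝ)) :=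
  {p | (0 ≤ p.1 ∧ p.1 ≤ (Fintype.card V : ℝ)) ∧
    (∀ i, 0 ≤ p.2 i) ∧ (∀ i, i ∉ S → p.2 i = 0) ∧ (∑ i, p.2 i = 1) ∧
    ∀ i, i ∈ S → p.1 * p.2 i ≤ (adjMat E).mulVec p.2 i}

lemma KSet_closed (S : Set V) : IsClosed (KSet E S) := by
  have hc2 : ∀ i : V, Continuous fun p : ℝ × (V → ℝ) => p.2 i := fun i =>
    (continuous_apply i).comp continuous_snd
  have hcmv : ∀ i : V, Continuous fun p : ℝ × (V → ℝ) => (adjMat E).mulVec p.2 i := by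
    intro i
    simp only [_root_.mulVec_apply]
    exact continuous_finset_sum _ fun j _ => (continuous_const.mul (hc2 j))
  unfold KSet
  simp only [Set.setOf_and, Set.setOf_forall]
  refine (IsClosed.inter (IsClosed.inter ?_ ?_) (IsClosed.inter ?_ (IsClosed.inter ?_
    (IsClosed.inter ?_ ?_))))
  · exact isClosed_le continuous_const continuous_fst
  · exact isClosed_le continuous_fst continuous_const
  · exact isClosed_iInter fun i => isClosed_le continuous_const (hc2 i)
  · refine isClosed_iInter fun i => ?_
    by_cases hiS : i ∈ S
    · simp [hiS]
    · simpa [hiS] using isClosed_eq (hc2 i) continuous_const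
  · exact isClosed_eq (continuous_finset_sum _ fun j _ => hc2 j) continuous_const
  · refine isClosed_iInter fun i => ?_
    by_cases hiS : i ∈ S
    · simpa [hiS] using isClosed_le (continuous_fst.mul (hc2 i)) (hcmv i)
    · simp [hiS]

lemma KSet_compact (S : Set V) : IsCompact (KSet E S) := by
  apply IsCompact.of_isClosed_subset
    ((isCompact_Icc (a := (0:ℝ)) (b := (Fintype.card V : ℝ))).prod
      (isCompact_Icc (a := (0 : V → ℝ)) (b := (1 : V → ℝ))))
    (KSet_closed S)
  rintro ⟨lam, x⟩ ⟨⟨h1, h2⟩, hnn, hsupp, hsum, _⟩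
  refine ⟨⟨h1, h2⟩, ?_, ?_⟩
  · intro i; exact hnn i
  · intro i
    calc x i ≤ ∑ j, x j := Finset.single_le_sum (fun j _ => hnn j) (Finset.mem_univ i)
    _ = 1 := hsum

end Aux4
section Aux5
set_option linter.unusedSectionVars false
set_option maxHeartbeats 1000000
variable {V : Type*} [Fintype V] {E : V → V → Prop}

lemma mulVec_add' (a b : V → ℝ) (i : V) :
    (adjMat E).mulVec (fun j => a j + b j) i
      = (adjMat E).mulVec a i + (adjMat E).mulVec b i := by
  simp [_root_.mulVec_apply, mul_add, Finset.sum_add_distrib]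

/-- Unnormalized feasibility. -/
def PF (E : V → V → Prop) (S : Set V) (lam : ℝ) (x : V → ℝ) : Prop :=
  (∀ i, 0 ≤ x i) ∧ (∀ i, i ∉ S → x i = 0) ∧
    ∀ i ∈ S, lam * x i ≤ (adjMat E).mulVec x i

/-- The improvement map. -/
def phi (E : V → V → Prop) (S : Set V) (x : V → ℝ) : V → ℝ :=
  fun i => x i + (if i ∈ S then (adjMat E).mulVec x i else 0)

section PhiLemmas
variable {S : Set V} {lam : ℝ} {x : V → ℝ}

private lemma wfun_ge (hx : PF E S lam x) (i : V) :
    lam * (adjMat E).mulVec x i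
      ≤ (adjMat E).mulVec (fun j => if j ∈ S then (adjMat E).mulVec x j else 0) i := by
  rw [_root_.mulVec_apply, _root_.mulVec_apply, Finset.mul_sum]
  apply Finset.sum_le_sum
  intro k _
  rw [mul_left_comm]
  apply mul_le_mul_of_nonneg_left _ (adjMat_nonneg _ _)
  by_cases hk : k ∈ S
  · rw [if_pos hk]; exact hx.2.2 k hk
  · rw [if_neg hk, hx.2.1 k hk, mul_zero]

private lemma wfun_gt (hx : PF E S lam x) {i j : V} (hjS : j ∈ S) (hE : E i j)
    (hst : lam * x j < (adjMat E).mulVec x j) :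
    lam * (adjMat E).mulVec x i
      < (adjMat E).mulVec (fun j => if j ∈ S then (adjMat E).mulVec x j else 0) i := by
  rw [_root_.mulVec_apply, _root_.mulVec_apply, Finset.mul_sum]
  apply Finset.sum_lt_sum
  · intro k _
    rw [mul_left_comm]
    apply mul_le_mul_of_nonneg_left _ (adjMat_nonneg _ _)
    by_cases hk : k ∈ S
    · rw [if_pos hk]; exact hx.2.2 k hk
    · rw [if_neg hk, hx.2.1 k hk, mul_zero]
  · refine ⟨j, Finset.mem_univ j, ?_⟩
    rw [mul_left_comm, if_pos hjS, adjMat_apply, if_pos hE, one_mul, one_mul]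
    exact hst

lemma phi_PF (hx : PF E S lam x) : PF E S lam (phi E S x) := by
  refine ⟨?_, ?_, ?_⟩
  · intro i
    unfold phi
    have : (0:ℝ) ≤ if i ∈ S then (adjMat E).mulVec x i else 0 := by
      split
      · exact mulVec_nonneg hx.1 i
      · exact le_refl 0
    linarith [hx.1 i]
  · intro i hi
    unfold phi
    rw [if_neg hi, hx.2.1 i hi, add_zero]
  · intro i hiS
    have hmv : (adjMat E).mulVec (phi E S x) i
        = (adjMat E).mulVec x i
          + (adjMat E).mulVec (fun j => if j ∈ S then (adjMat E).mulVec x j else 0) i :=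
      mulVec_add' x _ i
    have h1 := hx.2.2 i hiS
    have h2 := wfun_ge hx i
    have hphii : phi E S x i = x i + (adjMat E).mulVec x i := by
      unfold phi; rw [if_pos hiS]
    rw [hphii, hmv]
    nlinarith [h1, h2]

lemma phi_strict_pres (hx : PF E S lam x) {i : V} (hiS : i ∈ S)
    (hst : lam * x i < (adjMat E).mulVec x i) :
    lam * phi E S x i < (adjMat E).mulVec (phi E S x) i := by
  have hmv : (adjMat E).mulVec (phi E S x) i
      = (adjMat E).mulVec x i
        + (adjMat E).mulVec (fun j => if j ∈ S then (adjMat E).mulVec x j else 0) i :=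
    mulVec_add' x _ i
  have h2 := wfun_ge hx i
  have hphii : phi E S x i = x i + (adjMat E).mulVec x i := by
    unfold phi; rw [if_pos hiS]
  rw [hphii, hmv]
  nlinarith [hst, h2]

lemma phi_strict_spread (hx : PF E S lam x) {i j : V} (hiS : i ∈ S) (hjS : j ∈ S)
    (hE : E i j) (hst : lam * x j < (adjMat E).mulVec x j) :
    lam * phi E S x i < (adjMat E).mulVec (phi E S x) i := by
  have hmv : (adjMat E).mulVec (phi E S x) i
      = (adjMat E).mulVec x i
        + (adjMat E).mulVec (fun j => if j ∈ S then (adjMat E).mulVec x j else 0) i :=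
    mulVec_add' x _ i
  have h1 := hx.2.2 i hiS
  have h2 := wfun_gt hx hjS hE hst
  have hphii : phi E S x i = x i + (adjMat E).mulVec x i := by
    unfold phi; rw [if_pos hiS]
  rw [hphii, hmv]
  nlinarith [h1, h2]

end PhiLemmas

theorem perron {S : Set V} (hS : S.Nonempty) (hsc : SCOn E S) :
    ∃ lam : ℝ, 0 ≤ lam ∧ EigOn E S lam := by
  classical
  set M := (Fintype.card V : ℝ) with hM
  -- the uniform vector on S
  set k := (Finset.univ.filter (fun i => i ∈ S)).card with hkdef
  have hk : 0 < k := by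
    obtain ⟨s, hs⟩ := hS
    exact Finset.card_pos.mpr ⟨s, by simp [hs]⟩
  have hkR : (0:ℝ) < (k:ℝ) := by exact_mod_cast hk
  set u : V → ℝ := fun i => if i ∈ S then (k:ℝ)⁻¹ else 0 with hu
  have hunn : ∀ i, 0 ≤ u i := by
    intro i; rw [hu]; dsimp only; split
    · positivity
    · exact le_refl 0
  have husupp : ∀ i, i ∉ S → u i = 0 := by
    intro i hi; rw [hu]; dsimp only; rw [if_neg hi]
  have husum : ∑ i, u i = 1 := by
    rw [hu]
    dsimp only
    rw [← Finset.sum_filter, Finset.sum_const, ← hkdef, nsmul_eq_mul,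
      mul_inv_cancel₀ (ne_of_gt hkR)]
  -- the compact feasible region and its sup
  have hKne : (KSet E S).Nonempty := by
    refine ⟨(0, u), ⟨⟨le_refl 0, by positivity⟩, hunn, husupp, husum, ?_⟩⟩
    intro i _
    simpa using mulVec_nonneg hunn i
  have hKcpt : IsCompact (KSet E S) := KSet_compact S
  have hLcpt : IsCompact (Prod.fst '' KSet E S) := hKcpt.image continuous_fst
  have hLne : (Prod.fst '' KSet E S).Nonempty := hKne.image _
  set lam := sSup (Prod.fst '' KSet E S) with hlamdef
  have hlamL : lam ∈ Prod.fst '' KSet E S := hLcpt.sSup_mem hLne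
  obtain ⟨⟨lam', x⟩, hmem, hfst⟩ := hlamL
  simp only at hfst
  subst hfst
  obtain ⟨⟨hlam0, hlamM⟩, hxnn, hxsupp0, hxsum, hxineq⟩ := hmem
  simp only at hlam0 hlamM hxnn hxsupp0 hxsum hxineq
  have hub : ∀ mu y, 0 ≤ mu → Feas E S mu y → mu ≤ lam := by
    intro mu y hmu hf
    have hmuM : mu ≤ M := feas_bound hmu hf
    apply le_csSup hLcpt.bddAbove
    exact ⟨(mu, y), ⟨⟨hmu, hmuM⟩, hf.1, hf.2.1, hf.2.2.1, hf.2.2.2⟩, rfl⟩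
  -- equality on S
  have heq : ∀ i ∈ S, (adjMat E).mulVec x i = lam * x i := by
    by_contra hcon
    push_neg at hcon
    obtain ⟨i1, hi1S, hi1ne⟩ := hcon
    have hi1 : lam * x i1 < (adjMat E).mulVec x i1 :=
      lt_of_le_of_ne (hxineq i1 hi1S) (Ne.symm hi1ne)
    set z : ℕ → V → ℝ := fun n => (phi E S)^[n] x with hz
    have hzsucc : ∀ n, z (n+1) = phi E S (z n) := fun n =>
      Function.iterate_succ_apply' _ _ _
    have hPF : ∀ n, PF E S lam (z n) := by
      intro n
      induction n with
      | zero => exact ⟨hxnn, hxsupp0, hxineq⟩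
      | succ n ih => rw [hzsucc]; exact phi_PF ih
    have hmono : ∀ n i, i ∈ S → lam * z n i < (adjMat E).mulVec (z n) i →
        ∀ m, n ≤ m → lam * z m i < (adjMat E).mulVec (z m) i := by
      intro n i hiS hst m hnm
      induction m, hnm using Nat.le_induction with
      | base => exact hst
      | succ m hm ih => rw [hzsucc]; exact phi_strict_pres (hPF m) hiS ih
    have hreach : ∀ v, ReachIn E S v i1 → ∃ n, lam * z n v < (adjMat E).mulVec (z n) v := by
      intro v hr
      induction hr using Relation.ReflTransGen.head_induction_on with
      | refl => exact ⟨0, hi1⟩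
      | head hac hcb ih =>
          obtain ⟨n, hn⟩ := ih
          exact ⟨n+1, by
            rw [hzsucc]
            exact phi_strict_spread (hPF n) hac.1 hac.2.1 hac.2.2 hn⟩
    have huniform : ∀ F : Finset V, (∀ v ∈ F, v ∈ S) →
        ∃ n, ∀ v ∈ F, lam * z n v < (adjMat E).mulVec (z n) v := by
      intro F
      induction F using Finset.induction with
      | empty => exact fun _ => ⟨0, by simp⟩
      | @insert a F ha ih =>
          intro hsub
          obtain ⟨n1, h1⟩ := ih (fun v hv => hsub v (Finset.mem_insert_of_mem hv))
          have haS : a ∈ S := hsub a (Finset.mem_insert_self a F)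
          obtain ⟨n2, h2⟩ := hreach a (hsc a haS i1 hi1S)
          refine ⟨max n1 n2, ?_⟩
          intro v hv
          rcases Finset.mem_insert.mp hv with rfl | hvF
          · exact hmono n2 v haS h2 _ (le_max_right n1 n2)
          · exact hmono n1 v (hsub v hv) (h1 v hvF) _ (le_max_left n1 n2)
    obtain ⟨N, hN⟩ := huniform (Finset.univ.filter (fun i => i ∈ S)) (by simp)
    have hwPF := hPF N
    have hwstrict : ∀ v ∈ S, lam * (z N) v < (adjMat E).mulVec (z N) v := fun v hv =>
      hN v (by simp [hv])
    obtain ⟨s0, hs0⟩ := hS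
    have hwne : ∃ i, 0 < (z N) i := by
      by_contra hcon2
      push_neg at hcon2
      have hw0 : ∀ i, (z N) i = 0 := fun i => le_antisymm (hcon2 i) (hwPF.1 i)
      have h1 := hwstrict s0 hs0
      have h2 : (adjMat E).mulVec (z N) s0 = 0 := by
        rw [_root_.mulVec_apply]
        apply Finset.sum_eq_zero
        intro j _
        rw [hw0 j, mul_zero]
      rw [hw0 s0, h2, mul_zero] at h1
      exact lt_irrefl 0 h1
    set T := Finset.univ.filter (fun i => i ∈ S ∧ 0 < (z N) i) with hT
    have hTne : T.Nonempty := by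
      obtain ⟨i, hi⟩ := hwne
      have hiS : i ∈ S := by
        by_contra h
        rw [hwPF.2.1 i h] at hi
        exact lt_irrefl 0 hi
      exact ⟨i, by simp [hT, hiS, hi]⟩
    set eps := T.inf' hTne (fun i => ((adjMat E).mulVec (z N) i - lam * (z N) i) / (z N) i) with heps
    have hepspos : 0 < eps := by
      rw [heps, Finset.lt_inf'_iff]
      intro i hi
      rw [hT, Finset.mem_filter] at hi
      exact div_pos (by linarith [hwstrict i hi.2.1]) hi.2.2
    have hsw : 0 < ∑ i, (z N) i := by
      obtain ⟨i, hi⟩ := hwne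
      exact lt_of_lt_of_le hi
        (Finset.single_le_sum (fun j _ => hwPF.1 j) (Finset.mem_univ i))
    set c := (∑ i, (z N) i)⁻¹ with hc
    have hcpos : 0 < c := inv_pos.mpr hsw
    have hyfeas : Feas E S (lam + eps) (fun i => c * (z N) i) := by
      refine ⟨fun i => mul_nonneg hcpos.le (hwPF.1 i), fun i hi => by
        show c * z N i = 0
        rw [hwPF.2.1 i hi, mul_zero], ?_, ?_⟩
      · show ∑ i, c * z N i = 1
        rw [← Finset.mul_sum, hc, inv_mul_cancel₀ (ne_of_gt hsw)]
      · intro i hiS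
        show (lam + eps) * (c * z N i) ≤ (adjMat E).mulVec (fun i => c * z N i) i
        rw [mulVec_const_smul]
        have hkey : (lam + eps) * (z N) i ≤ (adjMat E).mulVec (z N) i := by
          rcases eq_or_lt_of_le (hwPF.1 i) with h0 | h0
          · rw [← h0, mul_zero]
            exact mulVec_nonneg hwPF.1 i
          · have hiT : i ∈ T := by simp [hT, hiS, h0]
            have hle : eps ≤ ((adjMat E).mulVec (z N) i - lam * (z N) i) / (z N) i :=
              Finset.inf'_le _ hiT
            have := (le_div_iff₀ h0).mp hle
            nlinarith
        nlinarith [hkey, hcpos]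
    have := hub (lam + eps) (fun i => c * (z N) i) (by linarith) hyfeas
    linarith
  -- support analysis
  have hxfeas : Feas E S lam x := ⟨hxnn, hxsupp0, hxsum, hxineq⟩
  obtain ⟨p0, hp0, hp0S⟩ := feas_pos_exists hxfeas
  by_cases hsing : ∀ a ∈ S, ∀ b ∈ S, a = b
  · refine ⟨lam, hlam0, x, hxnn, ?_, heq⟩
    intro i
    constructor
    · intro hi
      by_contra hiS
      rw [hxsupp0 i hiS] at hi
      exact lt_irrefl 0 hi
    · intro hiS
      have : i = p0 := hsing i hiS p0 hp0S
      rw [this]; exact hp0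
  · push_neg at hsing
    obtain ⟨a, haS, b, hbS, hab⟩ := hsing
    have hout : ∀ i ∈ S, ∃ j ∈ S, E i j := by
      intro i hiS
      have hvne : ∃ v ∈ S, v ≠ i := by
        rcases eq_or_ne a i with rfl | h
        · exact ⟨b, hbS, fun hbi => hab hbi.symm⟩
        · exact ⟨a, haS, h⟩
      obtain ⟨v, hvS, hvi⟩ := hvne
      rcases Relation.ReflTransGen.cases_head (hsc i hiS v hvS) with h | ⟨cc, hcc, _⟩
      · exact absurd h.symm hvi
      · exact ⟨cc, hcc.2.1, hcc.2.2⟩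
    have hufeas : Feas E S 1 u := by
      refine ⟨hunn, husupp, husum, ?_⟩
      intro i hiS
      obtain ⟨j, hjS, hij⟩ := hout i hiS
      have h1 : adjMat E i j * u j ≤ (adjMat E).mulVec u i := by
        rw [_root_.mulVec_apply]
        exact Finset.single_le_sum (f := fun l => adjMat E i l * u l)
          (fun l _ => mul_nonneg (adjMat_nonneg _ _) (hunn l)) (Finset.mem_univ j)
      have h2 : adjMat E i j * u j = (k:ℝ)⁻¹ := by
        rw [adjMat_apply, if_pos hij, one_mul, hu]
        dsimp only
        rw [if_pos hjS]
      have h3 : u i = (k:ℝ)⁻¹ := by rw [hu]; dsimp only; rw [if_pos hiS]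
      rw [one_mul, h3, ← h2]
      exact h1
    have hlam1 : (1:ℝ) ≤ lam := hub 1 u zero_le_one hufeas
    have hsupp_closed : ∀ i ∈ S, ∀ j, E i j → 0 < x j → 0 < x i := by
      intro i hiS j hij hj
      have h1 : (adjMat E).mulVec x i = lam * x i := heq i hiS
      have h2 : adjMat E i j * x j ≤ (adjMat E).mulVec x i := by
        rw [_root_.mulVec_apply]
        exact Finset.single_le_sum (f := fun l => adjMat E i l * x l)
          (fun l _ => mul_nonneg (adjMat_nonneg _ _) (hxnn l)) (Finset.mem_univ j)
      have h3 : 0 < lam * x i := by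
        rw [← h1]
        apply lt_of_lt_of_le _ h2
        rw [adjMat_apply, if_pos hij, one_mul]
        exact hj
      rcases mul_pos_iff.mp h3 with ⟨_, h⟩ | ⟨h, _⟩
      · exact h
      · linarith
    have hsupp_full : ∀ v, ReachIn E S v p0 → v ∈ S → 0 < x v := by
      intro v hr
      induction hr using Relation.ReflTransGen.head_induction_on with
      | refl => exact fun _ => hp0
      | head hac hcb ih => exact fun _ => hsupp_closed _ hac.1 _ hac.2.2 (ih hac.2.1)
    refine ⟨lam, hlam0, x, hxnn, ?_, heq⟩
    intro i
    constructor
    · intro hi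
      by_contra hiS
      rw [hxsupp0 i hiS] at hi
      exact lt_irrefl 0 hi
    · intro hiS
      exact hsupp_full i (hsc i hiS p0 hp0S) hiS

end Aux5
section Aux6
set_option linter.unusedSectionVars false
set_option maxHeartbeats 1000000
variable {V : Type*} [Fintype V] {E : V → V → Prop}

lemma reach_walk {S : Set V} {u v : V} (h : ReachIn E S u v) (hu : u ∈ S) :
    ∃ (n : ℕ) (w : ℕ → V), w 0 = u ∧ w n = v ∧ (∀ i ≤ n, w i ∈ S) ∧
      ∀ i < n, E (w i) (w (i+1)) := by
  induction h with
  | refl =>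
      exact ⟨0, fun _ => u, rfl, rfl, fun i _ => hu, fun i hi => absurd hi (by omega)⟩
  | @tail b c h1 h2 ih =>
      obtain ⟨n, w, hw0, hwn, hwS, hwarc⟩ := ih
      refine ⟨n+1, fun i => if i ≤ n then w i else c, ?_, ?_, ?_, ?_⟩
      · simp [hw0]
      · simp
      · intro i hi
        by_cases h : i ≤ n
        · simp [h, hwS i h]
        · simp [h, h2.2.1]
      · intro i hi
        by_cases h : i + 1 ≤ n
        · have : i ≤ n := by omega
          simp only [if_pos h, if_pos this]
          exact hwarc i (by omega)
        · have hin : i = n := by omega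
          subst hin
          simp only [if_pos (le_refl i), if_neg h]
          rw [hwn]
          exact h2.2.2

/-- A closed walk of length `m+1` inside `S`. -/
def CWalk (E : V → V → Prop) (S : Set V) (m : ℕ) : Prop :=
  ∃ w : ℕ → V, (∀ i ≤ m + 1, w i ∈ S) ∧ (∀ i < m + 1, E (w i) (w (i+1))) ∧
    w (m+1) = w 0

lemma exists_cwalk {S : Set V} (hsc : SCOn E S) {u v : V} (hu : u ∈ S) (hv : v ∈ S)
    (huv : u ≠ v) : ∃ m, CWalk E S m := by
  obtain ⟨n1, w1, h10, h1n, h1S, h1arc⟩ := reach_walk (hsc u hu v hv) hu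
  obtain ⟨n2, w2, h20, h2n, h2S, h2arc⟩ := reach_walk (hsc v hv u hu) hv
  have hn1 : 1 ≤ n1 := by
    by_contra h
    have : n1 = 0 := by omega
    subst this
    rw [← h10, h1n] at huv
    exact huv rfl
  have hn2 : 1 ≤ n2 := by
    by_contra h
    have : n2 = 0 := by omega
    subst this
    rw [← h20, h2n] at huv
    exact huv rfl
  refine ⟨n1 + n2 - 1, fun i => if i ≤ n1 then w1 i else w2 (i - n1), ?_, ?_, ?_⟩
  · intro i hi
    by_cases h : i ≤ n1
    · simp only [if_pos h]; exact h1S i h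
    · simp only [if_neg h]; exact h2S (i - n1) (by omega)
  · intro i hi
    by_cases h : i + 1 ≤ n1
    · simp only [if_pos h, if_pos (by omega : i ≤ n1)]
      exact h1arc i (by omega)
    · by_cases h' : i ≤ n1
      · have hin : i = n1 := by omega
        subst hin
        simp only [if_pos h', if_neg h]
        have : i + 1 - i = 1 := by omega
        rw [this, h1n, ← h20]
        exact h2arc 0 (by omega)
      · simp only [if_neg h, if_neg h']
        have : i + 1 - n1 = (i - n1) + 1 := by omega
        rw [this]
        exact h2arc (i - n1) (by omega)
  · have e1 : n1 + n2 - 1 + 1 = n1 + n2 := by omega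
    rw [e1]
    by_cases h : n1 + n2 ≤ n1
    · omega
    · simp only [if_neg h, if_pos (by omega : (0:ℕ) ≤ n1)]
      have : n1 + n2 - n1 = n2 := by omega
      rw [this, h2n, h10]

/-- Minimal closed walk: yields an injective chordless cycle, in ℕ indexing. -/
lemma exists_min_cycle_nat (hloop : ∀ a, ¬ E a a) {S : Set V} (hsc : SCOn E S)
    {u v : V} (hu : u ∈ S) (hv : v ∈ S) (huv : u ≠ v) :
    ∃ (N : ℕ) (w : ℕ → V), 2 ≤ N ∧ (∀ i ≤ N, w i ∈ S) ∧
      (∀ i < N, E (w i) (w (i+1))) ∧ w N = w 0 ∧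
      (∀ a < N, ∀ b < N, w a = w b → a = b) ∧
      (∀ a < N, ∀ b < N, E (w a) (w b) → b = (a+1) % N) := by
  classical
  have hQ : ∃ m, CWalk E S m := exists_cwalk hsc hu hv huv
  set m0 := Nat.find hQ with hm0
  obtain ⟨w, hwS, hwarc, hwcl⟩ := Nat.find_spec hQ
  set N := m0 + 1 with hN
  have hNw : ∀ i ≤ N, w i ∈ S := hwS
  have hNarc : ∀ i < N, E (w i) (w (i+1)) := hwarc
  have hNcl : w N = w 0 := hwcl
  have hmin : ∀ m, m < m0 → ¬ CWalk E S m := fun m hm => Nat.find_min hQ hm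
  -- N ≥ 2 by looplessness
  have hN2 : 2 ≤ N := by
    by_contra h
    have : N = 1 := by omega
    rw [this] at hNarc hNcl
    have := hNarc 0 (by omega)
    rw [hNcl] at this
    exact hloop (w 0) this
  -- cyclic arcs
  have hcyc : ∀ s < N, E (w s) (w ((s+1) % N)) := by
    intro s hs
    by_cases h : s + 1 < N
    · rw [Nat.mod_eq_of_lt h]
      exact hNarc s hs
    · have : s + 1 = N := by omega
      rw [this, Nat.mod_self, ← hNcl, ← this]
      exact hNarc s hs
  -- injectivity
  have hinj : ∀ a < N, ∀ b < N, w a = w b → a = b := by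
    intro a ha b hb hab
    by_contra hne
    -- wlog a < b
    rcases Nat.lt_or_ge a b with hlt | hge
    case _ hlt' =>
      have hcw : CWalk E S (b - a - 1) := by
        refine ⟨fun t => w (a + t), ?_, ?_, ?_⟩
        · intro i hi
          exact hNw (a + i) (by omega)
        · intro i hi
          exact hNarc (a + i) (by omega)
        · show w (a + (b - a - 1 + 1)) = w (a + 0)
          rw [show a + (b - a - 1 + 1) = b by omega, show a + 0 = a by omega]
          exact hab.symm
      exact hmin (b - a - 1) (by omega) hcw
    · have hlt : b < a := by omega
      have hcw : CWalk E S (a - b - 1) := by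
        refine ⟨fun t => w (b + t), ?_, ?_, ?_⟩
        · intro i hi
          exact hNw (b + i) (by omega)
        · intro i hi
          exact hNarc (b + i) (by omega)
        · show w (b + (a - b - 1 + 1)) = w (b + 0)
          rw [show b + (a - b - 1 + 1) = a by omega, show b + 0 = b by omega]
          exact hab
      exact hmin (a - b - 1) (by omega) hcw
  -- chordless
  have hchord : ∀ a < N, ∀ b < N, E (w a) (w b) → b = (a+1) % N := by
    intro a ha b hb hE
    by_contra hne
    have hab : a ≠ b := by
      intro h
      subst h
      exact hloop (w a) hE
    set d : ℕ := if b ≤ a then a - b else a + N - b with hd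
    have hdN : b + d = a ∨ b + d = a + N := by
      rw [hd]; split <;> omega
    have hwd : (b + d) % N = a := by
      rcases hdN with h | h
      · rw [h]; exact Nat.mod_eq_of_lt ha
      · rw [h, Nat.add_mod_right]; exact Nat.mod_eq_of_lt ha
    have hdlt : d + 1 < N := by
      rw [hd]
      split
      case isTrue h =>
        -- b ≤ a; if a - b = N - 1 then a = N-1 ∧ b = 0, so b = (a+1)%N
        by_contra hcon
        have h1 : a - b = N - 1 := by omega
        have h2 : a = N - 1 ∧ b = 0 := by omega
        apply hne
        rw [h2.2, h2.1]
        have : N - 1 + 1 = N := by omega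
        rw [this, Nat.mod_self]
      case isFalse h =>
        by_contra hcon
        have h1 : b = a + 1 := by omega
        apply hne
        rw [h1, Nat.mod_eq_of_lt (by omega)]
    have hcw : CWalk E S d := by
      refine ⟨fun t => if t ≤ d then w ((b + t) % N) else w b, ?_, ?_, ?_⟩
      · intro i hi
        by_cases h : i ≤ d
        · simp only [if_pos h]
          exact hNw _ (le_of_lt (Nat.mod_lt _ (by omega)))
        · simp only [if_neg h]
          exact hNw b (by omega)
      · intro i hi
        by_cases h : i + 1 ≤ d
        · simp only [if_pos h, if_pos (by omega : i ≤ d)]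
          have hmod : ((b + i) % N + 1) % N = (b + (i+1)) % N := by
            rw [show b + (i+1) = (b+i) + 1 by omega, Nat.add_mod (b+i) 1 N,
              Nat.mod_eq_of_lt (show 1 < N by omega)]
          rw [← hmod]
          exact hcyc _ (Nat.mod_lt _ (by omega))
        · have hieq : i = d := by omega
          subst hieq
          show E (if d ≤ d then w ((b + d) % N) else w b)
            (if d + 1 ≤ d then w ((b + (d+1)) % N) else w b)
          rw [if_neg h, if_pos (le_refl d), hwd]
          exact hE
      · show (if d + 1 ≤ d then w ((b + (d+1)) % N) else w b)
            = (if 0 ≤ d then w ((b + 0) % N) else w b)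
        rw [if_neg (by omega : ¬ d + 1 ≤ d), if_pos (by omega : (0:ℕ) ≤ d),
          Nat.add_zero, Nat.mod_eq_of_lt hb]
    exact hmin d (by omega) hcw
  exact ⟨N, w, hN2, hNw, hNarc, hNcl, hinj, hchord⟩

end Aux6
section Aux7
set_option linter.unusedSectionVars false
set_option maxHeartbeats 1000000
variable {V : Type*} [Fintype V] {E : V → V → Prop}

/-- A chordless directed cycle structure on the vertex set `C`. -/
def CycStruct (E : V → V → Prop) (C : Set V) : Prop :=
  ∃ n : ℕ, 2 ≤ n ∧ ∃ f : ZMod n → V, Function.Injective f ∧ Set.range f = C ∧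
    ∀ i j, E (f i) (f j) ↔ j = i + 1

lemma exists_min_cycle (hloop : ∀ a, ¬ E a a) {S : Set V} (hsc : SCOn E S)
    {u v : V} (hu : u ∈ S) (hv : v ∈ S) (huv : u ≠ v) :
    ∃ C : Set V, C ⊆ S ∧ C.Nonempty ∧ CycStruct E C := by
  obtain ⟨N, w, hN2, hNw, hNarc, hNcl, hinj, hchord⟩ :=
    exists_min_cycle_nat hloop hsc hu hv huv
  haveI : NeZero N := ⟨by omega⟩
  haveI : Fact (1 < N) := ⟨by omega⟩
  set f : ZMod N → V := fun z => w z.val with hf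
  have hval1 : ∀ z : ZMod N, (z + 1).val = (z.val + 1) % N := by
    intro z
    rw [ZMod.val_add, ZMod.val_one]
  have hzeq : ∀ a b : ZMod N, a.val = b.val → a = b := by
    intro a b hab
    calc a = ((a.val : ℕ) : ZMod N) := (ZMod.natCast_rightInverse a).symm
    _ = ((b.val : ℕ) : ZMod N) := by rw [hab]
    _ = b := ZMod.natCast_rightInverse b
  have hfinj : Function.Injective f := by
    intro a b hab
    exact hzeq a b (hinj a.val (ZMod.val_lt a) b.val (ZMod.val_lt b) hab)
  have hcyc : ∀ s < N, E (w s) (w ((s+1) % N)) := by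
    intro s hs
    by_cases h : s + 1 < N
    · rw [Nat.mod_eq_of_lt h]
      exact hNarc s hs
    · have hsN : s + 1 = N := by omega
      rw [hsN, Nat.mod_self, ← hNcl, ← hsN]
      exact hNarc s hs
  have harc : ∀ i j : ZMod N, E (f i) (f j) ↔ j = i + 1 := by
    intro i j
    constructor
    · intro hE
      have hb := hchord i.val (ZMod.val_lt i) j.val (ZMod.val_lt j) hE
      apply hzeq
      rw [hb, hval1]
    · intro hj
      subst hj
      show E (w i.val) (w ((i+1).val))
      rw [hval1]
      exact hcyc i.val (ZMod.val_lt i)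
  refine ⟨Set.range f, ?_, ⟨f 0, 0, rfl⟩, N, hN2, f, hfinj, rfl, harc⟩
  rintro _ ⟨z, rfl⟩
  exact hNw z.val (le_of_lt (ZMod.val_lt z))

lemma eigOn_one_of_cycStruct {C : Set V} (h : CycStruct E C) : EigOn E C 1 := by
  classical
  obtain ⟨n, hn2, f, hfinj, hfr, harc⟩ := h
  set x : V → ℝ := fun v => if v ∈ C then 1 else 0 with hx
  have hxj : ∀ j, x j = if j ∈ C then (1:ℝ) else 0 := fun j => rfl
  refine ⟨x, ?_, ?_, ?_⟩
  · intro i; rw [hxj i]; split <;> norm_num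
  · intro i; rw [hxj i]; split <;> simp_all
  · intro i hiC
    have hiC' := hiC
    rw [← hfr] at hiC'
    obtain ⟨a, rfl⟩ := hiC'
    have hterm : ∀ j, adjMat E (f a) j * x j
        = if j = f (a+1) then 1 else 0 := by
      intro j
      rw [hxj j]
      by_cases hj : j = f (a+1)
      · subst hj
        rw [if_pos rfl, adjMat_apply, if_pos ((harc a (a+1)).mpr rfl),
          if_pos (by rw [← hfr]; exact Set.mem_range_self _), one_mul]
      · rw [if_neg hj]
        by_cases hEj : E (f a) j
        · by_cases hjC : j ∈ C
          · rw [← hfr] at hjC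
            obtain ⟨b, rfl⟩ := hjC
            exact absurd (congrArg f ((harc a b).mp hEj)) hj
          · rw [if_neg hjC, mul_zero]
        · rw [adjMat_apply, if_neg hEj, zero_mul]
    rw [_root_.mulVec_apply]
    rw [Finset.sum_congr rfl (fun j _ => hterm j)]
    rw [Finset.sum_ite_eq' Finset.univ (f (a+1)) (fun _ => (1:ℝ)),
      if_pos (Finset.mem_univ _), hxj (f a), if_pos hiC]
    norm_num

lemma eigOn_singleton_zero (hloop : ∀ a, ¬ E a a) (v : V) : EigOn E {v} 0 := by
  classical
  set x : V → ℝ := fun i => if i ∈ ({v} : Set V) then 1 else 0 with hx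
  have hxj : ∀ j, x j = if j ∈ ({v} : Set V) then (1:ℝ) else 0 := fun j => rfl
  refine ⟨x, ?_, ?_, ?_⟩
  · intro i; rw [hxj i]; split <;> norm_num
  · intro i; rw [hxj i]; split <;> simp_all
  · intro i hi
    rcases hi with rfl
    rw [_root_.mulVec_apply, zero_mul]
    apply Finset.sum_eq_zero
    intro j _
    rw [hxj j]
    by_cases hj : j ∈ ({i} : Set V)
    · rcases hj with rfl
      rw [adjMat_apply, if_neg (hloop j), zero_mul]
    · rw [if_neg hj, mul_zero]

lemma eigOn_singleton_lam (hloop : ∀ a, ¬ E a a) {T : Set V}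
    (hsing : ∀ a ∈ T, ∀ b ∈ T, a = b) {t0 : V} (ht0 : t0 ∈ T) {lam : ℝ}
    (h : EigOn E T lam) : lam = 0 := by
  obtain ⟨x, hxnn, hxsupp, hxeq⟩ := h
  have heq := hxeq t0 ht0
  have hzero : (adjMat E).mulVec x t0 = 0 := by
    rw [_root_.mulVec_apply]
    apply Finset.sum_eq_zero
    intro j _
    rcases eq_or_lt_of_le (hxnn j) with h0 | h0
    · rw [← h0, mul_zero]
    · have hjT : j ∈ T := (hxsupp j).mp h0
      have : j = t0 := hsing j hjT t0 ht0
      subst this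
      rw [adjMat_apply, if_neg (hloop j), zero_mul]
  rw [hzero] at heq
  have hx0 : 0 < x t0 := (hxsupp t0).mpr ht0
  have := heq.symm
  rcases mul_eq_zero.mp this with h | h
  · exact h
  · exact absurd h (ne_of_gt hx0)

end Aux7
section Aux8
set_option linter.unusedSectionVars false
set_option maxHeartbeats 1000000
variable {V : Type*} [Fintype V] {E : V → V → Prop}

lemma cycStruct_to_isCycle {S : Set V} (h : CycStruct E S) :
    IsCycleDigraph (induceRel E S) := by
  obtain ⟨n, hn, f, hfinj, hfr, harc⟩ := h
  have hmem : ∀ z, f z ∈ S := fun z => hfr ▸ Set.mem_range_self z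
  have hbij : Function.Bijective (fun z : ZMod n => (⟨f z, hmem z⟩ : S)) := by
    constructor
    · intro a b hab
      exact hfinj (congrArg Subtype.val hab)
    · rintro ⟨s, hs⟩
      rw [← hfr] at hs
      obtain ⟨z, hz⟩ := hs
      exact ⟨z, Subtype.ext hz⟩
  set e := Equiv.ofBijective _ hbij with he
  refine ⟨n, hn, e.symm, ?_⟩
  intro a b
  have ha : f (e.symm a) = a.1 := congrArg Subtype.val (e.apply_symm_apply a)
  have hb : f (e.symm b) = b.1 := congrArg Subtype.val (e.apply_symm_apply b)
  show E a.1 b.1 ↔ e.symm b = e.symm a + 1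
  rw [← ha, ← hb]
  exact harc _ _

lemma isCycle_to_cycStruct {S : Set V} (h : IsCycleDigraph (induceRel E S)) :
    CycStruct E S := by
  obtain ⟨n, hn, e, he⟩ := h
  refine ⟨n, hn, fun z => (e.symm z).1, ?_, ?_, ?_⟩
  · intro a b hab
    exact e.symm.injective (Subtype.ext hab)
  · ext s
    constructor
    · rintro ⟨z, rfl⟩
      exact (e.symm z).2
    · intro hs
      refine ⟨e ⟨s, hs⟩, ?_⟩
      show ((e.symm (e ⟨s, hs⟩) : S) : V) = s
      rw [Equiv.symm_apply_apply]
  · intro i j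
    have := he (e.symm i) (e.symm j)
    rw [Equiv.apply_symm_apply, Equiv.apply_symm_apply] at this
    exact this

lemma isCycleDigraph_iff_cycStruct_univ :
    IsCycleDigraph E ↔ CycStruct E (Set.univ : Set V) := by
  constructor
  · rintro ⟨n, hn, e, he⟩
    refine ⟨n, hn, e.symm, e.symm.injective, Set.range_eq_univ.mpr e.symm.surjective, ?_⟩
    intro i j
    have := he (e.symm i) (e.symm j)
    rw [Equiv.apply_symm_apply, Equiv.apply_symm_apply] at this
    exact this
  · rintro ⟨n, hn, f, hfinj, hfr, harc⟩
    have hbij : Function.Bijective f := ⟨hfinj, Set.range_eq_univ.mp hfr⟩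
    set e := Equiv.ofBijective f hbij with he
    refine ⟨n, hn, e.symm, ?_⟩
    intro a b
    have ha : f (e.symm a) = a := e.apply_symm_apply a
    have hb : f (e.symm b) = b := e.apply_symm_apply b
    show E a b ↔ e.symm b = e.symm a + 1
    conv_lhs => rw [← ha, ← hb]
    exact harc _ _

lemma cycStruct_univ_SC_subset {T : Set V} (h : CycStruct E (Set.univ : Set V))
    (hT : SCOn E T) {u v : V} (hu : u ∈ T) (hv : v ∈ T) (huv : u ≠ v) :
    T = Set.univ := by
  obtain ⟨n, hn2, f, hfinj, hfr, harc⟩ := h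
  haveI : NeZero n := ⟨by omega⟩
  have hbij : Function.Bijective f := ⟨hfinj, Set.range_eq_univ.mp hfr⟩
  set e := Equiv.ofBijective f hbij with he
  set g : V → ZMod n := fun a => e.symm a with hg
  have hfg : ∀ a, f (g a) = a := fun a => e.apply_symm_apply a
  have key : ∀ a b, ReachIn E T a b → a ∈ T →
      ∃ L : ℕ, b = f (g a + L) ∧ ∀ t : ℕ, t ≤ L → f (g a + t) ∈ T := by
    intro a b hab haT
    induction hab with
    | refl =>
        refine ⟨0, by rw [Nat.cast_zero, add_zero, hfg], ?_⟩
        intro t ht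
        have : t = 0 := by omega
        subst this
        rw [Nat.cast_zero, add_zero, hfg]
        exact haT
    | @tail b c h1 h2 ih =>
        obtain ⟨L, hb, hmem⟩ := ih
        have hEbc : E (f (g a + L)) (f (g c)) := by
          rw [← hb, hfg]
          exact h2.2.2
        have := (harc _ _).mp hEbc
        refine ⟨L + 1, ?_, ?_⟩
        · rw [← hfg c, this]
          push_cast
          ring_nf
        · intro t ht
          rcases Nat.lt_or_ge t (L+1) with h' | h'
          · exact hmem t (by omega)
          · have : t = L + 1 := by omega
            subst this
            have hc : f (g a + (↑(L+1) : ZMod n)) = c := by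
              rw [← hfg c, this]
              push_cast
              ring_nf
            rw [hc]
            exact h2.2.1
  obtain ⟨L1, hv1, hm1⟩ := key u v (hT u hu v hv) hu
  obtain ⟨L2, hu2, hm2⟩ := key v u (hT v hv u hu) hv
  have hL1 : 1 ≤ L1 := by
    by_contra h
    have : L1 = 0 := by omega
    subst this
    rw [Nat.cast_zero, add_zero, hfg] at hv1
    exact huv hv1.symm
  have hL2 : 1 ≤ L2 := by
    by_contra h
    have : L2 = 0 := by omega
    subst this
    rw [Nat.cast_zero, add_zero, hfg] at hu2
    exact huv hu2
  have hgv : g v = g u + L1 := by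
    apply hfinj
    rw [hfg, hv1]
  have hgu : g u = g v + L2 := by
    apply hfinj
    rw [hfg, hu2]
  have hsum0 : ((L1 + L2 : ℕ) : ZMod n) = 0 := by
    have : g u = g u + ((L1 : ZMod n) + (L2 : ZMod n)) := by
      rw [← add_assoc, ← hgv, ← hgu]
    have h2 := add_left_cancel (a := g u) (b := (0 : ZMod n))
      (c := (L1 : ZMod n) + (L2 : ZMod n)) (by rw [add_zero, ← this])
    push_cast
    exact h2.symm
  have hdvd : n ∣ L1 + L2 := (ZMod.natCast_eq_zero_iff _ _).mp hsum0
  have hnle : n ≤ L1 + L2 := Nat.le_of_dvd (by omega) hdvd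
  apply Set.eq_univ_of_forall
  intro w
  set s := (g w - g u).val with hs
  have hslt : s < n := ZMod.val_lt _
  have hgw : g w = g u + (s : ZMod n) := by
    rw [hs, ZMod.natCast_rightInverse]
    ring
  have hw : w = f (g u + (s : ZMod n)) := by rw [← hgw, hfg]
  rcases le_or_gt s L1 with hsL | hsL
  · rw [hw]
    exact hm1 s hsL
  · have hts : s - L1 ≤ L2 := by omega
    have hcast : (s : ZMod n) = (L1 : ZMod n) + ((s - L1 : ℕ) : ZMod n) := by
      rw [← Nat.cast_add]
      congr 1
      omega
    have : w = f (g v + ((s - L1 : ℕ) : ZMod n)) := by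
      rw [hw, hcast, hgv]
      ring_nf
    rw [this]
    exact hm2 (s - L1) hts

lemma eigOn_univ_cycStruct {lam : ℝ} (h : CycStruct E (Set.univ : Set V))
    (he : EigOn E Set.univ lam) : lam = 1 := by
  classical
  obtain ⟨n, hn2, f, hfinj, hfr, harc⟩ := h
  haveI : NeZero n := ⟨by omega⟩
  obtain ⟨x, hxnn, hxsupp, hxeq⟩ := he
  have hxpos : ∀ v, 0 < x v := fun v => (hxsupp v).mpr trivial
  have hstep : ∀ a : ZMod n, x (f (a+1)) = lam * x (f a) := by
    intro a
    have heq := hxeq (f a) trivial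
    rw [_root_.mulVec_apply] at heq
    have hterm : ∀ j, adjMat E (f a) j * x j = if j = f (a+1) then x j else 0 := by
      intro j
      by_cases hj : j = f (a+1)
      · subst hj
        rw [if_pos rfl, adjMat_apply, if_pos ((harc a (a+1)).mpr rfl), one_mul]
      · rw [if_neg hj]
        by_cases hEj : E (f a) j
        · obtain ⟨b, rfl⟩ := Set.range_eq_univ.mp hfr j
          exact absurd (congrArg f ((harc a b).mp hEj)) hj
        · rw [adjMat_apply, if_neg hEj, zero_mul]
    rw [Finset.sum_congr rfl (fun j _ => hterm j),
      Finset.sum_ite_eq' Finset.univ (f (a+1)) x, if_pos (Finset.mem_univ _)] at heq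
    exact heq
  obtain ⟨aM, _, hmax⟩ := Finset.exists_max_image Finset.univ
    (fun a : ZMod n => x (f a)) ⟨0, Finset.mem_univ 0⟩
  obtain ⟨am, _, hmin⟩ := Finset.exists_min_image Finset.univ
    (fun a : ZMod n => x (f a)) ⟨0, Finset.mem_univ 0⟩
  have h1 : lam ≤ 1 := by
    have := hstep aM
    have hle : x (f (aM + 1)) ≤ x (f aM) := hmax (aM + 1) (Finset.mem_univ _)
    have := this ▸ hle
    exact le_of_mul_le_mul_right (by linarith [this]) (hxpos (f aM))
  have h2 : 1 ≤ lam := by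
    have := hstep am
    have hle : x (f am) ≤ x (f (am + 1)) := hmin (am + 1) (Finset.mem_univ _)
    have := this ▸ hle
    exact le_of_mul_le_mul_right (by linarith [this]) (hxpos (f am))
  linarith

end Aux8
section Aux9
set_option linter.unusedSectionVars false
set_option maxHeartbeats 1000000
variable {V : Type*} [Fintype V] {E : V → V → Prop}

lemma scOn_iff_sc {S : Set V} : SCOn E S ↔ StronglyConnected (induceRel E S) := by
  constructor
  · intro h u v
    have hup : ∀ {a b}, ReachIn E S a b → ∀ (ha : a ∈ S) (hb : b ∈ S),
        Relation.ReflTransGen (induceRel E S) ⟨a, ha⟩ ⟨b, hb⟩ := by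
      intro a b hab
      induction hab with
      | refl => intro ha hb; exact Relation.ReflTransGen.refl
      | @tail b c h1 h2 ih =>
          intro ha hc
          exact (ih ha h2.1).tail h2.2.2
    exact hup (h u.1 u.2 v.1 v.2) u.2 v.2
  · intro h a ha b hb
    have hdown : ∀ (p q : S), Relation.ReflTransGen (induceRel E S) p q →
        ReachIn E S p.1 q.1 := by
      intro p q hpq
      induction hpq with
      | refl => exact Relation.ReflTransGen.refl
      | @tail b c h1 h2 ih => exact ih.tail ⟨b.2, c.2, h2⟩
    exact hdown ⟨a, ha⟩ ⟨b, hb⟩ (h ⟨a, ha⟩ ⟨b, hb⟩)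

end Aux9

theorem stmt11' {V : Type*} [Fintype V] [Nonempty V] (E : V → V → Prop)
    (hloop : ∀ v, ¬ E v v) (hsc : StronglyConnected E) :
    (compSpec (adjMat E)).ncard = 3 ↔
      ((∀ S : Set V, S ≠ Set.univ → S.Nonempty → StronglyConnected (induceRel E S) →
          ((∃ v, S = {v}) ∨ IsCycleDigraph (induceRel E S))) ∧
        ¬ IsCycleDigraph E ∧ 1 < Fintype.card V) := by
  classical
  have hscU : SCOn E (Set.univ : Set V) := by
    intro u _ v _
    exact Relation.ReflTransGen.mono (p := stepRel E Set.univ) (fun a b h => ⟨trivial, trivial, h⟩) u v (hsc u v)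
  have hUne : (Set.univ : Set V).Nonempty := ⟨Classical.arbitrary V, trivial⟩
  obtain ⟨lamV, hlamV0, hEigV⟩ := perron hUne hscU
  constructor
  · intro h3
    have hfin : (compSpec (adjMat E)).Finite := by
      by_contra hf
      rw [Set.Infinite.ncard hf] at h3
      omega
    have hcard : 1 < Fintype.card V := by
      by_contra hc
      have hc1 : Fintype.card V ≤ 1 := by omega
      have hall : ∀ a b : V, a = b := fun a b => Fintype.card_le_one_iff.mp hc1 a b
      set v₀ := Classical.arbitrary V
      have hsub : compSpec (adjMat E) = {0} := by
        apply Set.eq_singleton_iff_unique_mem.mpr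
        refine ⟨mem_compSpec_iff.mpr ⟨{v₀}, ⟨v₀, rfl⟩, eigOn_singleton_zero hloop v₀⟩, ?_⟩
        intro lam hlam
        obtain ⟨S, hSne, hE⟩ := mem_compSpec_iff.mp hlam
        obtain ⟨s, hs⟩ := hSne
        exact eigOn_singleton_lam hloop (fun a _ b _ => hall a b) hs hE
      rw [hsub, Set.ncard_singleton] at h3
      omega
    obtain ⟨u0, v0, huv0⟩ : ∃ u v : V, u ≠ v := Fintype.exists_pair_of_one_lt_card hcard
    have hnotcyc : ¬ IsCycleDigraph E := by
      intro hcycD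
      rw [isCycleDigraph_iff_cycStruct_univ] at hcycD
      have hsub : compSpec (adjMat E) = {0, 1} := by
        apply Set.Subset.antisymm
        · intro lam hlam
          obtain ⟨S, hSne, hE⟩ := mem_compSpec_iff.mp hlam
          obtain ⟨Cl, hClne, hClS, hClsc, hClE⟩ := eigOn_scc hSne hE
          by_cases hsing : ∀ a ∈ Cl, ∀ b ∈ Cl, a = b
          · left
            exact eigOn_singleton_lam hloop hsing hClne.choose_spec hClE
          · push_neg at hsing
            obtain ⟨a, ha, b, hb, hab⟩ := hsing
            have hCluniv : Cl = Set.univ := cycStruct_univ_SC_subset hcycD hClsc ha hb hab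
            right
            show lam = 1
            exact eigOn_univ_cycStruct hcycD (hCluniv ▸ hClE)
        · intro t ht
          rcases ht with rfl | rfl
          · exact mem_compSpec_iff.mpr ⟨{u0}, ⟨u0, rfl⟩, eigOn_singleton_zero hloop u0⟩
          · exact mem_compSpec_iff.mpr ⟨Set.univ, hUne, eigOn_one_of_cycStruct hcycD⟩
      rw [hsub, Set.ncard_pair (by norm_num : (0:ℝ) ≠ 1)] at h3
      omega
    refine ⟨?_, hnotcyc, hcard⟩
    intro S hSuniv hSne hSsc
    have hsc' : SCOn E S := scOn_iff_sc.mpr hSsc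
    by_cases hsing : ∀ a ∈ S, ∀ b ∈ S, a = b
    · left
      obtain ⟨s, hs⟩ := hSne
      exact ⟨s, Set.eq_singleton_iff_unique_mem.mpr ⟨hs, fun x hx => hsing x hx s hs⟩⟩
    · right
      push_neg at hsing
      obtain ⟨a, ha, b, hb, hab⟩ := hsing
      obtain ⟨C, hCS, hCne, hCcyc⟩ := exists_min_cycle hloop hsc' ha hb hab
      by_cases hCeq : C = S
      · exact cycStruct_to_isCycle (hCeq ▸ hCcyc)
      · exfalso
        obtain ⟨lamS, hlamS0, hES⟩ := perron hSne hsc'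
        have h1S : (1:ℝ) < lamS :=
          eigOn_lt hCne hCS hCeq hsc' (eigOn_one_of_cycStruct hCcyc) hES
        have hSV : lamS < lamV :=
          eigOn_lt hSne (Set.subset_univ S) hSuniv hscU hES hEigV
        have hsub4 : ({0, 1, lamS, lamV} : Set ℝ) ⊆ compSpec (adjMat E) := by
          intro t ht
          rcases ht with rfl | rfl | rfl | rfl
          · exact mem_compSpec_iff.mpr ⟨{a}, ⟨a, rfl⟩, eigOn_singleton_zero hloop a⟩
          · exact mem_compSpec_iff.mpr ⟨C, hCne, eigOn_one_of_cycStruct hCcyc⟩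
          · exact mem_compSpec_iff.mpr ⟨S, hSne, hES⟩
          · exact mem_compSpec_iff.mpr ⟨Set.univ, hUne, hEigV⟩
        have hc4 : ({0, 1, lamS, lamV} : Set ℝ).ncard = 4 := by
          rw [Set.ncard_insert_of_notMem (by
              simp only [Set.mem_insert_iff, Set.mem_singleton_iff]
              push_neg
              refine ⟨by norm_num, by linarith, by linarith⟩),
            Set.ncard_insert_of_notMem (by
              simp only [Set.mem_insert_iff, Set.mem_singleton_iff]
              push_neg
              refine ⟨by linarith, by linarith⟩),
            Set.ncard_insert_of_notMem (by
              simp only [Set.mem_singleton_iff]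
              linarith),
            Set.ncard_singleton]
        have := Set.ncard_le_ncard hsub4 hfin
        omega
  · rintro ⟨hall, hnc, hcard⟩
    obtain ⟨u0, v0, huv0⟩ : ∃ u v : V, u ≠ v := Fintype.exists_pair_of_one_lt_card hcard
    obtain ⟨C0, hC0sub, hC0ne, hC0cyc⟩ :=
      exists_min_cycle hloop hscU (Set.mem_univ u0) (Set.mem_univ v0) huv0
    have hC0univ : C0 ≠ Set.univ := by
      intro h
      exact hnc (isCycleDigraph_iff_cycStruct_univ.mpr (h ▸ hC0cyc))
    have h1V : (1:ℝ) < lamV :=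
      eigOn_lt hC0ne (Set.subset_univ _) hC0univ hscU
        (eigOn_one_of_cycStruct hC0cyc) hEigV
    have hset : compSpec (adjMat E) = {0, 1, lamV} := by
      apply Set.Subset.antisymm
      · intro lam hlam
        obtain ⟨S, hSne, hE⟩ := mem_compSpec_iff.mp hlam
        obtain ⟨Cl, hClne, hClS, hClsc, hClE⟩ := eigOn_scc hSne hE
        by_cases hCluniv : Cl = Set.univ
        · right; right
          show lam = lamV
          exact eigOn_unique hUne (hCluniv ▸ hClE) hEigV
        · rcases hall Cl hCluniv hClne (scOn_iff_sc.mp hClsc) with ⟨v, hv⟩ | hcyc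
          · left
            refine eigOn_singleton_lam hloop ?_ hClne.choose_spec hClE
            intro x hx y hy
            rw [hv] at hx hy
            rw [hx, hy]
          · right; left
            show lam = 1
            exact eigOn_unique hClne hClE
              (eigOn_one_of_cycStruct (isCycle_to_cycStruct hcyc))
      · intro t ht
        rcases ht with rfl | rfl | rfl
        · exact mem_compSpec_iff.mpr ⟨{u0}, ⟨u0, rfl⟩, eigOn_singleton_zero hloop u0⟩
        · exact mem_compSpec_iff.mpr ⟨C0, hC0ne, eigOn_one_of_cycStruct hC0cyc⟩
        · exact mem_compSpec_iff.mpr ⟨Set.univ, hUne, hEigV⟩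
    rw [hset]
    rw [Set.ncard_insert_of_notMem (by
        simp only [Set.mem_insert_iff, Set.mem_singleton_iff]
        push_neg
        refine ⟨by norm_num, by linarith⟩),
      Set.ncard_insert_of_notMem (by
        simp only [Set.mem_singleton_iff]
        linarith),
      Set.ncard_singleton]
/-- a strongly connected digraph has exactly three complementarity
eigenvalues iff all its proper induced strongly connected subdigraphs are single
vertices or directed cycles, and it is itself neither a cycle nor a single vertex. -/
theorem stmt11 {V : Type*} [Fintype V] [Nonempty V] (E : V → V → Prop)
    (hloop : ∀ v, ¬ E v v) (hsc : StronglyConnected E) :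
    (compSpec (adjMat E)).ncard = 3 ↔
      ((∀ S : Set V, S ≠ Set.univ → S.Nonempty → StronglyConnected (induceRel E S) →
          ((∃ v, S = {v}) ∨ IsCycleDigraph (induceRel E S))) ∧
        ¬ IsCycleDigraph E ∧ 1 < Fintype.card V) := by
  exact stmt11' E hloop hsc
end
end

section
/- If D is a strongly connected finite digraph that is not a directed cycle and has at least one arc, then D contains as a subdigraph either an ∞-digraph (two directed cycles sharing exactly one vertex) or a θ-digraph (a directed cycle together with a nontrivial directed path joining two distinct vertices of the cycle, internally disjoint from the cycle). -/
open Matrix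
open scoped Classical

noncomputable section

/-- `D` contains some `∞`-digraph as a subdigraph. -/
def HasInftySubdigraph {V : Type*} (E : V → V → Prop) : Prop :=
  ∃ r s : ℕ, 2 ≤ r ∧ 2 ≤ s ∧ InftySub E r s

/-- `D` contains some `θ`-digraph as a subdigraph: a directed cycle together with a
nontrivial directed path joining two distinct vertices of the cycle, internally
disjoint from the cycle, none of whose arcs is an arc of the cycle. -/
def HasThetaSubdigraph {V : Type*} (E : V → V → Prop) : Prop :=
  ∃ (n m : ℕ), 2 ≤ n ∧ 1 ≤ m ∧ ∃ (f : ZMod n → V) (p : Fin (m + 1) → V),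
    Function.Injective f ∧ Function.Injective p ∧
    (∀ i, E (f i) (f (i + 1))) ∧
    (∀ i : Fin m, E (p i.castSucc) (p i.succ)) ∧
    p 0 ≠ p (Fin.last m) ∧ (∃ i, f i = p 0) ∧ (∃ j, f j = p (Fin.last m)) ∧
    (∀ k : Fin (m + 1), k ≠ 0 → k ≠ Fin.last m → p k ∉ Set.range f) ∧
    (∀ i : Fin m, ¬ ∃ j : ZMod n, f j = p i.castSucc ∧ f (j + 1) = p i.succ)

section Stmt12Helpers

variable {V : Type*} (E : V → V → Prop)

private def IsWalk12 {n : ℕ} (w : Fin (n+1) → V) : Prop :=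
  ∀ i : Fin n, E (w i.castSucc) (w i.succ)

private lemma walk_of_reach12 {u v : V} (h : Relation.ReflTransGen E u v) :
    ∃ (n : ℕ) (w : Fin (n+1) → V), IsWalk12 E w ∧ w 0 = u ∧ w (Fin.last n) = v := by
  induction h using Relation.ReflTransGen.head_induction_on with
  | refl => exact ⟨0, fun _ => v, fun i => absurd i.2 (by omega), rfl, rfl⟩
  | @head a c hab _ ih =>
    obtain ⟨n, w, hw, h0, hl⟩ := ih
    refine ⟨n+1, Fin.cases a w, ?_, by simp, ?_⟩
    · intro i
      induction i using Fin.cases with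
      | zero =>
        have h1 : ((0 : Fin (n+1)).succ) = Fin.succ 0 := rfl
        simp only [Fin.castSucc_zero, Fin.cases_zero, h1, Fin.cases_succ, h0]
        exact hab
      | succ j =>
        show E (Fin.cases a w j.succ.castSucc) (Fin.cases a w j.succ.succ)
        rw [← Fin.succ_castSucc, Fin.cases_succ, Fin.cases_succ]
        exact hw j
    · show Fin.cases a w (Fin.last (n+1)) = v
      rw [← Fin.succ_last, Fin.cases_succ]; exact hl

private lemma min_walk12 (u : V) (T : V → Prop)
    (h : ∃ (n : ℕ) (w : Fin (n+1) → V), IsWalk12 E w ∧ w 0 = u ∧ T (w (Fin.last n))) :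
    ∃ (n : ℕ) (w : Fin (n+1) → V), IsWalk12 E w ∧ w 0 = u ∧ T (w (Fin.last n)) ∧
      Function.Injective w ∧ ∀ k : Fin (n+1), (k : ℕ) < n → ¬ T (w k) := by
  classical
  obtain ⟨n, hPn⟩ := h
  induction n using Nat.strong_induction_on with
  | _ n ih =>
  by_cases hsm : ∃ m, m < n ∧ ∃ w : Fin (m+1) → V, IsWalk12 E w ∧ w 0 = u ∧ T (w (Fin.last m))
  · obtain ⟨m, hm1, hm2⟩ := hsm
    exact ih m hm1 hm2
  push_neg at hsm
  obtain ⟨w, hw, h0, hT⟩ := hPn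
  have hmin : ∀ m, m < n → ∀ w' : Fin (m+1) → V,
      ¬ (IsWalk12 E w' ∧ w' 0 = u ∧ T (w' (Fin.last m))) := by
    intro m hm w' hc
    exact (hsm m hm) w' hc.1 hc.2.1 hc.2.2
  have estep : ∀ (x y : Fin (n+1)), (x:ℕ) < n → (y:ℕ) = (x:ℕ)+1 → E (w x) (w y) := by
    intro x y hx hy
    have h1 := hw ⟨(x:ℕ), hx⟩
    have e1 : (⟨(x:ℕ), hx⟩ : Fin n).castSucc = x := Fin.ext rfl
    have e2 : (⟨(x:ℕ), hx⟩ : Fin n).succ = y := Fin.ext (by simp [hy])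
    rwa [e1, e2] at h1
  have key : ∀ i j : Fin (n+1), (i : ℕ) < (j : ℕ) → w i ≠ w j := by
    intro i j hlt hij
    have hjn : (j : ℕ) ≤ n := by omega
    have hin : (i : ℕ) < n := by omega
    set m := n - ((j : ℕ) - (i : ℕ)) with hm
    have hmn : m < n := by omega
    refine hmin m hmn (fun k => if (k : ℕ) ≤ (i : ℕ) then w ⟨(k : ℕ), by omega⟩
      else w ⟨(k : ℕ) + ((j : ℕ) - (i : ℕ)), by have := k.2; omega⟩) ⟨?_, ?_, ?_⟩
    · intro t
      have ht := t.2
      have hcs : ((t.castSucc : Fin (m+1)) : ℕ) = (t : ℕ) := rfl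
      have hss : ((t.succ : Fin (m+1)) : ℕ) = (t : ℕ) + 1 := rfl
      simp only [hcs, hss]
      split_ifs with h1 h2 h2
      · exact estep _ _ (by simp; omega) (by simp)
      · have e1 : (⟨(t : ℕ), by omega⟩ : Fin (n+1)) = i := Fin.ext (by simp; omega)
        rw [e1, hij]
        exact estep _ _ (by omega) (by simp; omega)
      · omega
      · exact estep _ _ (by simp; omega) (by simp; omega)
    · have h00 : ((0 : Fin (m+1)) : ℕ) = 0 := rfl
      simp only [h00, if_pos (Nat.zero_le _)]
      rw [← h0]
      exact congrArg w (Fin.ext rfl)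
    · have hl : ((Fin.last m : Fin (m+1)) : ℕ) = m := rfl
      simp only [hl]
      split_ifs with hc
      · have e1 : (⟨m, by omega⟩ : Fin (n+1)) = i := Fin.ext (by simp; omega)
        rw [e1, hij]
        have e2 : j = Fin.last n := Fin.ext (by simp; omega)
        rw [e2]
        exact hT
      · have e1 : (⟨m + ((j:ℕ) - (i:ℕ)), by omega⟩ : Fin (n+1)) = Fin.last n :=
          Fin.ext (by simp; omega)
        rw [e1]; exact hT
  refine ⟨n, w, hw, h0, hT, ?_, ?_⟩
  · intro i j hij
    rcases lt_trichotomy (i : ℕ) (j : ℕ) with h' | h' | h'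
    · exact absurd hij (key i j h')
    · exact Fin.ext h'
    · exact absurd hij.symm (key j i h')
  · intro k hk hTk
    refine hmin (k : ℕ) (by omega) (fun t => w ⟨(t : ℕ), by have := t.2; omega⟩) ⟨?_, ?_, ?_⟩
    · intro t
      have ht := t.2
      exact estep _ _ (by simp; omega) (by simp)
    · rw [← h0]; exact congrArg w (Fin.ext rfl)
    · show T (w ⟨((Fin.last (k : ℕ)) : ℕ), _⟩)
      have e1 : (⟨((Fin.last (k : ℕ)) : ℕ), by omega⟩ : Fin (n+1)) = k := Fin.ext (by simp)
      rw [e1]; exact hTk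

private lemma zmod_succ_val12 {n : ℕ} (hn : 1 ≤ n) (i : ZMod (n+1)) :
    (i + 1).val = (i.val + 1) % (n+1) := by
  rw [ZMod.val_add, ZMod.val_one_eq_one_mod, Nat.one_mod_eq_one.mpr (by omega)]

private def cyc12 {V : Type*} (v : V) {n : ℕ} (p : Fin (n+1) → V) (i : ZMod (n+1)) : V :=
  if i.val = 0 then v else p ⟨i.val - 1, by have := ZMod.val_lt i; omega⟩

private lemma cyc12_zero {v : V} {n : ℕ} {p : Fin (n+1) → V} {i : ZMod (n+1)} (h : i.val = 0) :
    cyc12 v p i = v := by rw [cyc12, if_pos h]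

private lemma cyc12_ne {v : V} {n : ℕ} {p : Fin (n+1) → V} {i : ZMod (n+1)} (h : ¬ i.val = 0) :
    cyc12 v p i = p ⟨i.val - 1, by have := ZMod.val_lt i; omega⟩ := by rw [cyc12, if_neg h]

private def pre12 {V : Type*} (v : V) {n : ℕ} (q : Fin (n+1) → V) (k : Fin (n+2)) : V :=
  if (k : ℕ) = 0 then v else q ⟨(k : ℕ) - 1, by have := k.2; omega⟩

private lemma pre12_zero {v : V} {n : ℕ} {q : Fin (n+1) → V} {k : Fin (n+2)} (h : (k : ℕ) = 0) :
    pre12 v q k = v := by rw [pre12, if_pos h]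

private lemma pre12_ne {v : V} {n : ℕ} {q : Fin (n+1) → V} {k : Fin (n+2)} (h : ¬ (k : ℕ) = 0) :
    pre12 v q k = q ⟨(k : ℕ) - 1, by have := k.2; omega⟩ := by rw [pre12, if_neg h]

private lemma cycle_of_walk12 {n : ℕ} (hn : 1 ≤ n) (v : V) (p : Fin (n+1) → V)
    (hw : IsWalk12 E p) (hlast : p (Fin.last n) = v) (hinj : Function.Injective p)
    (hE : E v (p 0)) :
    Function.Injective (cyc12 v p) ∧ cyc12 v p 0 = v ∧ cyc12 v p 1 = p 0 ∧
      (∀ i, E (cyc12 v p i) (cyc12 v p (i+1))) ∧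
      Set.range (cyc12 v p) = insert v {x | ∃ k : Fin (n+1), (k : ℕ) < n ∧ p k = x} := by
  have hvint : ∀ k : Fin (n+1), (k : ℕ) < n → p k ≠ v := by
    intro k hk hc
    have : k = Fin.last n := hinj (by rw [hc, hlast])
    simp [Fin.ext_iff, Fin.last] at this
    omega
  have hvlt : ∀ i : ZMod (n+1), i.val < n + 1 := fun i => ZMod.val_lt i
  have hone : (1 : ZMod (n+1)).val = 1 := by
    rw [ZMod.val_one_eq_one_mod]
    exact Nat.one_mod_eq_one.mpr (by omega)
  refine ⟨?_, cyc12_zero (by simp), ?_, ?_, ?_⟩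
  · intro i j hij
    have hi := hvlt i; have hj := hvlt j
    by_cases h1 : i.val = 0 <;> by_cases h2 : j.val = 0
    · exact ZMod.val_injective _ (h1.trans h2.symm)
    · rw [cyc12_zero h1, cyc12_ne h2] at hij
      exact absurd hij.symm (hvint _ (by simp; omega))
    · rw [cyc12_ne h1, cyc12_zero h2] at hij
      exact absurd hij (hvint _ (by simp; omega))
    · rw [cyc12_ne h1, cyc12_ne h2] at hij
      have := hinj hij
      simp [Fin.ext_iff] at this
      exact ZMod.val_injective _ (by omega)
  · rw [cyc12_ne (by omega)]
    exact congrArg p (Fin.ext (by simp [hone]))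
  · intro i
    have hi := hvlt i
    have hsucc : (i + 1).val = (i.val + 1) % (n + 1) := zmod_succ_val12 hn i
    by_cases h2 : i.val = n
    · have hs1 : (i + 1).val = 0 := by rw [hsucc, h2, Nat.mod_self]
      rw [cyc12_ne (by omega), cyc12_zero hs1, ← hlast]
      have h3 := hw ⟨n - 1, by omega⟩
      have e1 : (⟨n-1, by omega⟩ : Fin n).castSucc =
          (⟨i.val - 1, by omega⟩ : Fin (n+1)) := Fin.ext (by simp; omega)
      have e2 : (⟨n-1, by omega⟩ : Fin n).succ = Fin.last n := Fin.ext (by simp; omega)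
      rwa [e1, e2] at h3
    · have hs1 : (i + 1).val = i.val + 1 := by
        rw [hsucc]; exact Nat.mod_eq_of_lt (by omega)
      by_cases h1 : i.val = 0
      · rw [cyc12_zero h1, cyc12_ne (by omega)]
        have e1 : (⟨(i+1).val - 1, by have := hvlt (i+1); omega⟩ : Fin (n+1)) = 0 :=
          Fin.ext (by simp; omega)
        rw [e1]; exact hE
      · rw [cyc12_ne h1, cyc12_ne (by omega)]
        have h3 := hw ⟨i.val - 1, by omega⟩
        have e1 : (⟨i.val-1, by omega⟩ : Fin n).castSucc =
            (⟨i.val - 1, by omega⟩ : Fin (n+1)) := Fin.ext rfl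
        have e2 : (⟨i.val-1, by omega⟩ : Fin n).succ =
            (⟨(i+1).val - 1, by have := hvlt (i+1); omega⟩ : Fin (n+1)) :=
          Fin.ext (by simp; omega)
        rwa [e1, e2] at h3
  · ext x
    simp only [Set.mem_range, Set.mem_insert_iff, Set.mem_setOf_eq]
    constructor
    · rintro ⟨i, hi⟩
      by_cases h1 : i.val = 0
      · rw [cyc12_zero h1] at hi; exact Or.inl hi.symm
      · rw [cyc12_ne h1] at hi
        exact Or.inr ⟨⟨i.val - 1, by have := hvlt i; omega⟩, by have := hvlt i; simp; omega, hi⟩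
    · rintro (rfl | ⟨k, hk, rfl⟩)
      · exact ⟨0, cyc12_zero (by simp)⟩
      · refine ⟨(((k : ℕ) + 1 : ℕ) : ZMod (n+1)), ?_⟩
        have hv : ((((k : ℕ) + 1 : ℕ) : ZMod (n+1))).val = (k : ℕ) + 1 := by
          rw [ZMod.val_natCast]; exact Nat.mod_eq_of_lt (by omega)
        rw [cyc12_ne (by simp only [hv]; omega)]
        refine congrArg p (Fin.ext ?_)
        show ((((k : ℕ) + 1 : ℕ) : ZMod (n+1))).val - 1 = (k : ℕ)
        simp only [hv]
        omega

private lemma outdeg_one_cycle12 {V : Type*} [Fintype V] (E : V → V → Prop)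
    (hsc : StronglyConnected E) (hcard : ∃ u w : V, u ≠ w)
    (hout1 : ∀ v a b, E v a → E v b → a = b) : IsCycleDigraph E := by
  classical
  obtain ⟨u0, w0, hu0w0⟩ := hcard
  have hex : ∀ x : V, ∃ y, E x y := by
    intro x
    rcases em (x = u0) with rfl | hne
    · rcases (hsc x w0).cases_head with rfl | ⟨y, hy, _⟩
      · exact absurd rfl hu0w0
      · exact ⟨y, hy⟩
    · rcases (hsc x u0).cases_head with rfl | ⟨y, hy, _⟩
      · exact absurd rfl hne
      · exact ⟨y, hy⟩
  let σ : V → V := fun x => Classical.choose (hex x)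
  have hσ : ∀ x, E x (σ x) := fun x => Classical.choose_spec (hex x)
  have huniq : ∀ x y, E x y → y = σ x := fun x y h => hout1 x y (σ x) h (hσ x)
  have reach_it : ∀ x y : V, Reach E x y → ∃ k, y = σ^[k] x := by
    intro x y h
    induction h with
    | refl => exact ⟨0, rfl⟩
    | tail _ hbc ih =>
      obtain ⟨k, rfl⟩ := ih
      exact ⟨k + 1, by rw [huniq _ _ hbc, Function.iterate_succ_apply']⟩
  obtain ⟨k0, hk0⟩ := reach_it (σ u0) u0 (hsc (σ u0) u0)
  have hper0 : σ^[k0 + 1] u0 = u0 := by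
    rw [Function.iterate_add_apply, Function.iterate_one]; exact hk0.symm
  have hPex : ∃ m, 0 < m ∧ σ^[m] u0 = u0 := ⟨k0 + 1, by omega, hper0⟩
  have hspec := Nat.find_spec hPex
  set n := Nat.find hPex with hn
  obtain ⟨hnpos, hper⟩ := hspec
  have hσu0 : σ u0 ≠ u0 := by
    intro hc
    have hall : ∀ k, σ^[k] u0 = u0 := by
      intro k
      induction k with
      | zero => rfl
      | succ t iht => rw [Function.iterate_succ_apply', iht, hc]
    obtain ⟨m, hm⟩ := reach_it u0 w0 (hsc u0 w0)
    exact hu0w0 (hm.trans (hall m)).symm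
  have hn2 : 2 ≤ n := by
    by_contra hcon
    have h1 : n = 1 := by omega
    rw [h1, Function.iterate_one] at hper
    exact hσu0 hper
  have hmin : ∀ m, 0 < m → m < n → σ^[m] u0 ≠ u0 := by
    intro m hm1 hm2 hc
    exact Nat.find_min hPex hm2 ⟨hm1, hc⟩
  have hmod : ∀ m : ℕ, σ^[m] u0 = σ^[m % n] u0 := by
    intro m
    conv_lhs => rw [← Nat.div_add_mod m n]
    rw [Nat.add_comm, Function.iterate_add_apply]
    congr 1
    generalize (m / n) = q
    induction q with
    | zero => rfl
    | succ t iht => rw [Nat.mul_succ, Function.iterate_add_apply, hper, iht]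
  haveI : NeZero n := ⟨by omega⟩
  let g : ZMod n → V := fun i => σ^[i.val] u0
  have gkey : ∀ i j : ZMod n, i.val < j.val → g i ≠ g j := by
    intro i j hlt hij
    have hjlt : j.val < n := ZMod.val_lt j
    have hij' : σ^[i.val] u0 = σ^[j.val] u0 := hij
    have h2 : σ^[n - j.val] (σ^[j.val] u0) = σ^[n - j.val] (σ^[i.val] u0) :=
      congrArg (σ^[n - j.val]) hij'.symm
    rw [← Function.iterate_add_apply, ← Function.iterate_add_apply] at h2
    have h1 : n - j.val + j.val = n := by omega
    rw [h1, hper] at h2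
    exact hmin (n - j.val + i.val) (by omega) (by omega) h2.symm
  have ginj : Function.Injective g := by
    intro i j hij
    rcases lt_trichotomy i.val j.val with h' | h' | h'
    · exact absurd hij (gkey i j h')
    · exact ZMod.val_injective _ h'
    · exact absurd hij.symm (gkey j i h')
  have gsurj : Function.Surjective g := by
    intro x
    obtain ⟨m, rfl⟩ := reach_it u0 x (hsc u0 x)
    refine ⟨(m : ZMod n), ?_⟩
    show σ^[((m : ZMod n)).val] u0 = σ^[m] u0
    rw [ZMod.val_natCast, ← hmod]
  have hg1 : ∀ i : ZMod n, g (i + 1) = σ (g i) := by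
    intro i
    show σ^[(i+1).val] u0 = σ (σ^[i.val] u0)
    have hv : (i + 1).val = (i.val + 1) % n := by
      have h3 : ((i.val + 1 : ℕ) : ZMod n) = i + 1 := by
        push_cast [ZMod.natCast_val, ZMod.cast_id]
        rfl
      rw [← h3, ZMod.val_natCast]
    rw [hv, ← hmod, Function.iterate_succ_apply']
  refine ⟨n, hn2, (Equiv.ofBijective g ⟨ginj, gsurj⟩).symm, ?_⟩
  intro a b
  set e := (Equiv.ofBijective g ⟨ginj, gsurj⟩).symm with he
  have hga : g (e a) = a := (Equiv.ofBijective g ⟨ginj, gsurj⟩).apply_symm_apply a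
  have hgb : g (e b) = b := (Equiv.ofBijective g ⟨ginj, gsurj⟩).apply_symm_apply b
  constructor
  · intro hab
    have : b = σ a := huniq a b hab
    show e b = e a + 1
    apply ginj
    rw [hgb, hg1, hga, this]
  · intro hab
    have : e b = e a + 1 := hab
    have hb : b = g (e a + 1) := by rw [← this, hgb]
    rw [hb, hg1, hga]
    exact hσ a

end Stmt12Helpers

/-- a strongly connected (simple) digraph that is not a directed cycle
and has at least one arc contains an `∞`-subdigraph or a `θ`-subdigraph. -/
theorem stmt12 {V : Type*} [Fintype V] (E : V → V → Prop)
    (hloop : ∀ v, ¬ E v v) (hsc : StronglyConnected E)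
    (hnc : ¬ IsCycleDigraph E) (harc : ∃ u v, E u v) :
    HasInftySubdigraph E ∨ HasThetaSubdigraph E := by
  classical
  obtain ⟨u, w, huw⟩ := harc
  have hune : u ≠ w := fun h => hloop u (h ▸ huw)
  by_cases hbr : ∃ v a b, E v a ∧ E v b ∧ a ≠ b
  case neg =>
    push_neg at hbr
    exact absurd (outdeg_one_cycle12 E hsc ⟨u, w, hune⟩ (fun v a b ha hb => hbr v a b ha hb)) hnc
  case pos =>
  obtain ⟨v, a, b, hva, hvb, hab⟩ := hbr
  have hav : a ≠ v := fun h => hloop v (h ▸ hva)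
  have hbv : b ≠ v := fun h => hloop v (h ▸ hvb)
  obtain ⟨n₁, p, hp, hp0, hpl, hpinj, hpint⟩ :=
    min_walk12 E a (fun x => x = v) (walk_of_reach12 E (hsc a v))
  have h1 : 1 ≤ n₁ := by
    by_contra h
    have h0 : n₁ = 0 := by omega
    subst h0
    have h00 : p (Fin.last 0) = p 0 := congrArg p (Fin.ext rfl)
    exact hav (by rw [← hp0, ← hpl]; exact h00.symm)
  obtain ⟨fcinj, fc0, fc1, fcE, fcrange⟩ :=
    cycle_of_walk12 E h1 v p hp hpl hpinj (by rw [hp0]; exact hva)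
  have hvrange : v ∈ Set.range (cyc12 v p) := ⟨0, fc0⟩
  obtain ⟨n₂, q, hq, hq0, hql, hqinj, hqint⟩ :=
    min_walk12 E b (fun x => x ∈ Set.range (cyc12 v p)) (by
      obtain ⟨n', w', hw', h0', hl'⟩ := walk_of_reach12 E (hsc b v)
      exact ⟨n', w', hw', h0', by rw [hl']; exact hvrange⟩)
  have hqv : ∀ t : Fin (n₂+1), (t : ℕ) < n₂ → q t ≠ v :=
    fun t ht hc => hqint t ht (hc ▸ hvrange)
  by_cases hcase : q (Fin.last n₂) = v
  · -- ∞-subdigraph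
    left
    have h2 : 1 ≤ n₂ := by
      by_contra h
      have h0 : n₂ = 0 := by omega
      subst h0
      have h00 : q (Fin.last 0) = q 0 := congrArg q (Fin.ext rfl)
      exact hbv (by rw [← hq0, ← hcase]; exact h00.symm)
    obtain ⟨gcinj, gc0, gc1, gcE, gcrange⟩ :=
      cycle_of_walk12 E h2 v q hq hcase hqinj (by rw [hq0]; exact hvb)
    refine ⟨n₁ + 1, n₂ + 1, by omega, by omega, cyc12 v p, cyc12 v q, fcinj, gcinj,
      by rw [fc0, gc0], ?_, fcE, gcE⟩
    rw [fc0]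
    ext x
    simp only [Set.mem_inter_iff, Set.mem_singleton_iff]
    constructor
    · rintro ⟨hx1, hx2⟩
      rw [gcrange] at hx2
      rcases hx2 with rfl | ⟨k, hk, rfl⟩
      · rfl
      · exact absurd hx1 (hqint k hk)
    · rintro rfl
      exact ⟨hvrange, ⟨0, gc0⟩⟩
  · -- θ-subdigraph
    right
    have hqlast : ∀ t : Fin (n₂+1), q t ≠ v := by
      intro t
      rcases Nat.lt_or_ge (t : ℕ) n₂ with ht | ht
      · exact hqv t ht
      · have : t = Fin.last n₂ := Fin.ext (by have := t.2; simp [Fin.last]; omega)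
        rw [this]; exact hcase
    refine ⟨n₁ + 1, n₂ + 1, by omega, by omega, cyc12 v p, pre12 v q, fcinj,
      ?_, fcE, ?_, ?_, ?_, ?_, ?_, ?_⟩
    · -- injectivity of the path
      intro i j hij
      have hi := i.2; have hj := j.2
      by_cases hi0 : (i : ℕ) = 0 <;> by_cases hj0 : (j : ℕ) = 0
      · exact Fin.ext (by omega)
      · rw [pre12_zero hi0, pre12_ne hj0] at hij
        exact absurd hij.symm (hqlast _)
      · rw [pre12_ne hi0, pre12_zero hj0] at hij
        exact absurd hij (hqlast _)
      · rw [pre12_ne hi0, pre12_ne hj0] at hij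
        have := hqinj hij
        simp [Fin.ext_iff] at this
        exact Fin.ext (by omega)
    · -- path edges
      intro i
      have hi := i.2
      have hcs : ((i.castSucc : Fin (n₂+2)) : ℕ) = (i : ℕ) := rfl
      have hss : ((i.succ : Fin (n₂+2)) : ℕ) = (i : ℕ) + 1 := rfl
      by_cases hi0 : (i : ℕ) = 0
      · rw [pre12_zero (by rw [hcs]; exact hi0), pre12_ne (by rw [hss]; omega)]
        have e0 : (⟨((i.succ : Fin (n₂+2)) : ℕ) - 1, by simp only [hss]; omega⟩ : Fin (n₂+1)) = 0 :=
          Fin.ext (by simp only [Fin.val_mk, Fin.val_zero, hss]; omega)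
        rw [e0, hq0]
        exact hvb
      · rw [pre12_ne (by rw [hcs]; exact hi0), pre12_ne (by rw [hss]; omega)]
        have h3 := hq ⟨(i : ℕ) - 1, by omega⟩
        have e1 : (⟨(i : ℕ)-1, by omega⟩ : Fin n₂).castSucc =
            (⟨((i.castSucc : Fin (n₂+2)) : ℕ) - 1, by simp [hcs]⟩ : Fin (n₂+1)) :=
          Fin.ext (by simp [hcs])
        have e2 : (⟨(i : ℕ)-1, by omega⟩ : Fin n₂).succ =
            (⟨((i.succ : Fin (n₂+2)) : ℕ) - 1, by simp only [hss]; omega⟩ : Fin (n₂+1)) :=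
          Fin.ext (by simp [hss]; omega)
        rwa [e1, e2] at h3
    · -- endpoints distinct
      rw [pre12_zero (by simp), pre12_ne (by simp)]
      have e0 : (⟨((Fin.last (n₂+1) : Fin (n₂+2)) : ℕ) - 1, by simp⟩ : Fin (n₂+1)) =
          Fin.last n₂ := Fin.ext (by simp)
      rw [e0]
      exact Ne.symm hcase
    · exact ⟨0, by rw [fc0, pre12_zero (by simp)]⟩
    · obtain ⟨j, hj⟩ := hql
      refine ⟨j, ?_⟩
      rw [pre12_ne (by simp)]
      have e0 : (⟨((Fin.last (n₂+1) : Fin (n₂+2)) : ℕ) - 1, by simp⟩ : Fin (n₂+1)) =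
          Fin.last n₂ := Fin.ext (by simp)
      rw [e0]
      exact hj
    · -- internal vertices off the cycle
      intro k hk0 hkl
      have hv0 : (k : ℕ) ≠ 0 := fun h => hk0 (Fin.ext h)
      have hvl : (k : ℕ) ≠ n₂ + 1 := fun h => hkl (Fin.ext (by simp [Fin.last, h]))
      rw [pre12_ne hv0]
      exact hqint ⟨(k : ℕ) - 1, by have := k.2; omega⟩ (by have := k.2; simp; omega)
    · -- no arc of the path is a chord of the cycle
      rintro i ⟨j, hj1, hj2⟩
      have hi := i.2
      have hcs : ((i.castSucc : Fin (n₂+2)) : ℕ) = (i : ℕ) := rfl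
      have hss : ((i.succ : Fin (n₂+2)) : ℕ) = (i : ℕ) + 1 := rfl
      by_cases hi0 : (i : ℕ) = 0
      · have hj0 : j = 0 := fcinj (by rw [hj1, pre12_zero (by rw [hcs]; exact hi0), fc0])
        subst hj0
        rw [zero_add] at hj2
        have e0 : (⟨((i.succ : Fin (n₂+2)) : ℕ) - 1, by simp only [hss]; omega⟩ : Fin (n₂+1)) = 0 :=
          Fin.ext (by simp only [Fin.val_mk, Fin.val_zero, hss]; omega)
        have hb2 : cyc12 v p 1 = b := by
          rw [hj2, pre12_ne (by rw [hss]; omega), e0, hq0]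
        exact hab (by rw [← hp0, ← fc1]; exact hb2)
      · refine hqint ⟨((i.castSucc : Fin (n₂+2)) : ℕ) - 1, by simp [hcs]⟩
          (by simp [hcs]; omega) ⟨j, ?_⟩
        rw [hj1, pre12_ne (by rw [hcs]; exact hi0)]
end
end

section
/- The ∞-digraph ∞(r,s), the coalescence of two directed cycles C⃗_r and C⃗_s at a single vertex (r, s ≥ 2), has complementarity spectrum {0, 1, ρ(∞(r,s))}, where ρ(∞(r,s)) > 1, so it has exactly three complementarity eigenvalues. -/
open Matrix
open scoped Classical

noncomputable section

lemma aux_exists_root (r s : ℕ) (hr : 2 ≤ r) (hs : 2 ≤ s) :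
    ∃ t : ℝ, 1 < t ∧ t ^ (r + s) = t ^ r + t ^ s := by
  have hc : ContinuousOn (fun t : ℝ => t ^ (r+s) - t^r - t^s) (Set.Icc 1 2) := by
    fun_prop
  have key := intermediate_value_Icc (by norm_num : (1:ℝ) ≤ 2) hc
  have h2r : (2:ℝ) ≤ 2 ^ r := by
    calc (2:ℝ) = 2 ^ 1 := (pow_one 2).symm
    _ ≤ 2 ^ r := pow_le_pow_right₀ one_le_two (by omega)
  have h2s : (2:ℝ) ≤ 2 ^ s := by
    calc (2:ℝ) = 2 ^ 1 := (pow_one 2).symm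
    _ ≤ 2 ^ s := pow_le_pow_right₀ one_le_two (by omega)
  have hmem : (0:ℝ) ∈ Set.Icc ((1:ℝ) ^ (r+s) - 1^r - 1^s) ((2:ℝ) ^ (r+s) - 2^r - 2^s) := by
    constructor
    · simp
    · have e : (2:ℝ)^(r+s) = 2^r * 2^s := pow_add 2 r s
      nlinarith
  obtain ⟨t, htm, ht0⟩ := key hmem
  simp only at ht0
  refine ⟨t, ?_, by linarith⟩
  rcases lt_or_eq_of_le htm.1 with h | h
  · exact h
  · exfalso
    simp only [← h] at ht0
    norm_num at ht0

lemma aux_root_gt_one {r s : ℕ} (hr : 2 ≤ r) (hs : 2 ≤ s) {a : ℝ} (ha : 0 < a)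
    (e : a ^ (r+s) = a^r + a^s) : 1 < a := by
  by_contra hcon
  push_neg at hcon
  have h1 : a ^ (r+s) ≤ a ^ r := pow_le_pow_of_le_one ha.le hcon (by omega)
  have h2 : 0 < a ^ s := pow_pos ha s
  linarith

lemma aux_sum_inv (r s : ℕ) {a : ℝ} (ha : 1 < a) (e : a ^ (r+s) = a^r + a^s) :
    (1/a)^r + (1/a)^s = 1 := by
  have ha0 : a ≠ 0 := by linarith
  have hr0 : a ^ r ≠ 0 := pow_ne_zero _ ha0
  have hs0 : a ^ s ≠ 0 := pow_ne_zero _ ha0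
  rw [pow_add] at e
  rw [div_pow, div_pow, one_pow, one_pow, div_add_div _ _ hr0 hs0, div_eq_one_iff_eq (mul_ne_zero hr0 hs0)]
  linarith

lemma aux_root_unique {r s : ℕ} (hr : 2 ≤ r) (hs : 2 ≤ s) {a b : ℝ} (ha : 1 < a) (hb : 1 < b)
    (ea : a ^ (r+s) = a^r + a^s) (eb : b ^ (r+s) = b^r + b^s) : a = b := by
  have key : ∀ x y : ℝ, 1 < x → 1 < y → x < y →
      (1/y)^r + (1/y)^s < (1/x)^r + (1/x)^s := by
    intro x y hx hy hxy
    have h1 : (0:ℝ) < 1/y := by positivity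
    have h2 : 1/y < 1/x := by
      apply one_div_lt_one_div_of_lt <;> linarith
    have := pow_lt_pow_left₀ h2 h1.le (by omega : r ≠ 0)
    have := pow_lt_pow_left₀ h2 h1.le (by omega : s ≠ 0)
    linarith
  rcases lt_trichotomy a b with h | h | h
  · have := key a b ha hb h
    rw [aux_sum_inv r s ha ea, aux_sum_inv r s hb eb] at this
    linarith
  · exact h
  · have := key b a hb ha h
    rw [aux_sum_inv r s ha ea, aux_sum_inv r s hb eb] at this
    linarith

lemma aux_pow_one {a : ℝ} (ha : 0 < a) {n : ℕ} (hn : n ≠ 0) (e : a ^ n = 1) : a = 1 := by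
  rcases lt_trichotomy a 1 with h | h | h
  · have := pow_lt_one₀ ha.le h hn
    linarith
  · exact h
  · have := one_lt_pow₀ h hn
    linarith

lemma aux_zmod_succ {n : ℕ} [Fact (1 < n)] (i : ZMod n) :
    (i + 1 = 0 ∧ i.val = n - 1) ∨ (i + 1 ≠ 0 ∧ (i + 1).val = i.val + 1) := by
  have hn : 1 < n := Fact.out
  haveI : NeZero n := ⟨by omega⟩
  have hlt : i.val < n := ZMod.val_lt i
  have hv1 : (1 : ZMod n).val = 1 := ZMod.val_one n
  by_cases hc : i.val = n - 1
  · left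
    refine ⟨?_, hc⟩
    have hi : i = ((n - 1 : ℕ) : ZMod n) := by rw [← hc, ZMod.natCast_zmod_val]
    rw [hi]
    have e : ((n - 1 : ℕ) : ZMod n) + 1 = ((n : ℕ) : ZMod n) := by
      have h' : n - 1 + 1 = n := by omega
      calc ((n - 1 : ℕ) : ZMod n) + 1 = ((n - 1 + 1 : ℕ) : ZMod n) := by
            rw [Nat.cast_add, Nat.cast_one]
        _ = ((n : ℕ) : ZMod n) := by rw [h']
    rw [e, ZMod.natCast_self]
  · right
    have hadd : (i + 1).val = (i.val + 1) % n := by rw [ZMod.val_add, hv1]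
    have hlt2 : i.val + 1 < n := by omega
    rw [Nat.mod_eq_of_lt hlt2] at hadd
    constructor
    · intro h0
      rw [h0, ZMod.val_zero] at hadd
      omega
    · exact hadd

lemma aux_add_sub_val {n : ℕ} [NeZero n] (i : ZMod n) :
    i + ((n - i.val : ℕ) : ZMod n) = 0 := by
  have h1 : ((n - i.val : ℕ) : ZMod n) = (n : ZMod n) - ((i.val : ℕ) : ZMod n) := by
    rw [Nat.cast_sub (ZMod.val_le i)]
  rw [h1, ZMod.natCast_self, ZMod.natCast_zmod_val]
  ring

lemma aux_reach_zero {n : ℕ} {V : Type*} (f : ZMod n → V) (x : V → ℝ)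
    (step : ∀ i : ZMod n, i ≠ 0 → 0 < x (f i) → 0 < x (f (i + 1))) :
    ∀ (m : ℕ) (i : ZMod n), i + (m : ZMod n) = 0 → 0 < x (f i) → 0 < x (f 0) := by
  intro m
  induction m with
  | zero =>
    intro i h0 hx
    have : i = 0 := by simpa using h0
    rwa [this] at hx
  | succ m ih =>
    intro i h0 hx
    by_cases hi : i = 0
    · rwa [hi] at hx
    · refine ih (i + 1) ?_ (step i hi hx)
      push_cast at h0 ⊢
      linear_combination h0

lemma aux_chain {n : ℕ} {V : Type*} (f : ZMod n → V) (x : V → ℝ) (lam : ℝ)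
    (hlam : 0 < lam) (hx1 : 0 < x (f 1))
    (step : ∀ i : ZMod n, i ≠ 0 → 0 < x (f i) → x (f (i + 1)) = lam * x (f i)) :
    ∀ m : ℕ, m + 1 ≤ n → x (f ((m + 1 : ℕ) : ZMod n)) = lam ^ m * x (f 1) := by
  intro m
  induction m with
  | zero => intro _; simp
  | succ m ih =>
    intro hm
    have ihm := ih (by omega)
    have hne : ((m + 1 : ℕ) : ZMod n) ≠ 0 := by
      intro h0
      have := (ZMod.natCast_eq_zero_iff (m+1) n).mp h0
      have := Nat.le_of_dvd (by omega) this
      omega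
    have hpos : 0 < x (f ((m + 1 : ℕ) : ZMod n)) := by
      rw [ihm]; positivity
    have hstep := step _ hne hpos
    rw [ihm] at hstep
    have hc : ((m + 1 + 1 : ℕ) : ZMod n) = ((m + 1 : ℕ) : ZMod n) + 1 := by push_cast; ring
    rw [hc, hstep]
    ring

lemma aux_chain_full {n : ℕ} (hn : 1 ≤ n) {V : Type*} (f : ZMod n → V) (x : V → ℝ) (lam : ℝ)
    (hlam : 0 < lam) (hx1 : 0 < x (f 1))
    (step : ∀ i : ZMod n, i ≠ 0 → 0 < x (f i) → x (f (i + 1)) = lam * x (f i)) :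
    x (f 0) = lam ^ (n - 1) * x (f 1) := by
  have h := aux_chain f x lam hlam hx1 step (n - 1) (by omega)
  rwa [show ((n - 1 + 1 : ℕ) : ZMod n) = 0 by
    rw [show n - 1 + 1 = n from by omega, ZMod.natCast_self]] at h

/-- the `∞(r,s)` digraph has complementarity spectrum `{0, 1, ρ}` with
`ρ > 1`, hence exactly three complementarity eigenvalues. -/
theorem stmt14 {V : Type*} [Fintype V] (E : V → V → Prop) (r s : ℕ)
    (hr : 2 ≤ r) (hs : 2 ≤ s) (h : IsInftyDigraph E r s) :
    compSpec (adjMat E) = {0, 1, rho E} ∧ 1 < rho E ∧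
      (compSpec (adjMat E)).ncard = 3 := by
  classical
  obtain ⟨r, rfl⟩ : ∃ m, r = m + 2 := ⟨r - 2, by omega⟩
  obtain ⟨s, rfl⟩ : ∃ m, s = m + 2 := ⟨s - 2, by omega⟩
  obtain ⟨f, g, hfinj, hginj, hfg0, hinter, huniv, hE⟩ := h
  haveI : NeZero (r + 2) := ⟨by omega⟩
  haveI : NeZero (s + 2) := ⟨by omega⟩
  haveI : Fact (1 < r + 2) := ⟨by omega⟩
  haveI : Fact (1 < s + 2) := ⟨by omega⟩
  have hone_r : (1 : ZMod (r + 2)) ≠ 0 := by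
    intro h1
    have h2 := congrArg ZMod.val h1
    rw [ZMod.val_one, ZMod.val_zero] at h2
    omega
  have hone_s : (1 : ZMod (s + 2)) ≠ 0 := by
    intro h1
    have h2 := congrArg ZMod.val h1
    rw [ZMod.val_one, ZMod.val_zero] at h2
    omega
  have hfg_eq : ∀ i j, f i = g j → i = 0 ∧ j = 0 := by
    intro i j hij
    have hmem : f i ∈ Set.range f ∩ Set.range g := ⟨⟨i, rfl⟩, ⟨j, hij.symm⟩⟩
    rw [hinter] at hmem
    have hi : i = 0 := hfinj (Set.mem_singleton_iff.mp hmem)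
    refine ⟨hi, hginj ?_⟩
    rw [← hij, hi, hfg0]
  have hEf : ∀ (i : ZMod (r + 2)) v, E (f i) v ↔ (v = f (i + 1) ∨ (i = 0 ∧ v = g 1)) := by
    intro i v
    rw [hE]
    constructor
    · rintro (⟨i', hi', hv⟩ | ⟨j, hj, hv⟩)
      · left
        have h' : i = i' := hfinj hi'
        rw [hv, ← h']
      · obtain ⟨hi0, hj0⟩ := hfg_eq i j hj
        exact Or.inr ⟨hi0, by rw [hv, hj0, zero_add]⟩
    · rintro (hv | ⟨hi0, hv⟩)
      · exact Or.inl ⟨i, rfl, hv⟩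
      · exact Or.inr ⟨0, by rw [hi0, hfg0], by rw [hv, zero_add]⟩
  have hEg : ∀ (j : ZMod (s + 2)) v, E (g j) v ↔ (v = g (j + 1) ∨ (j = 0 ∧ v = f 1)) := by
    intro j v
    rw [hE]
    constructor
    · rintro (⟨i, hi, hv⟩ | ⟨j', hj', hv⟩)
      · obtain ⟨hi0, hj0⟩ := hfg_eq i j hi.symm
        exact Or.inr ⟨hj0, by rw [hv, hi0, zero_add]⟩
      · left
        have h' : j = j' := hginj hj'
        rw [hv, ← h']
    · rintro (hv | ⟨hj0, hv⟩)
      · exact Or.inr ⟨j, rfl, hv⟩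
      · exact Or.inl ⟨0, by rw [hj0, ← hfg0], by rw [hv, zero_add]⟩
  have hmv : ∀ (x : V → ℝ) u, (adjMat E).mulVec x u = ∑ v, if E u v then x v else 0 := by
    intro x u
    simp only [adjMat, Matrix.mulVec, dotProduct, Matrix.of_apply, ite_mul, one_mul,
      zero_mul]
  have hsum_one : ∀ (x : V → ℝ) (w : V) (P : V → Prop), (∀ v, P v ↔ v = w) →
      (∑ v, if P v then x v else 0) = x w := by
    intro x w P hP
    have h1 : ∀ v, (if P v then x v else 0) = (if v = w then x v else 0) := by
      intro v
      by_cases h : v = w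
      · rw [if_pos ((hP v).mpr h), if_pos h]
      · rw [if_neg (fun hp => h ((hP v).mp hp)), if_neg h]
    rw [Finset.sum_congr rfl (fun v _ => h1 v)]
    simp
  have hsum_two : ∀ (x : V → ℝ) (w1 w2 : V), w1 ≠ w2 → ∀ (P : V → Prop),
      (∀ v, P v ↔ (v = w1 ∨ v = w2)) →
      (∑ v, if P v then x v else 0) = x w1 + x w2 := by
    intro x w1 w2 hne P hP
    have h1 : ∀ v, (if P v then x v else 0) =
        (if v = w1 then x v else 0) + (if v = w2 then x v else 0) := by
      intro v
      by_cases ha : v = w1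
      · have hb : v ≠ w2 := by rw [ha]; exact hne
        rw [if_pos ((hP v).mpr (Or.inl ha)), if_pos ha, if_neg hb, add_zero]
      · by_cases hb : v = w2
        · rw [if_pos ((hP v).mpr (Or.inr hb)), if_neg ha, if_pos hb, zero_add]
        · rw [if_neg (fun hp => by rcases (hP v).mp hp with h | h; exacts [ha h, hb h]),
            if_neg ha, if_neg hb, add_zero]
    rw [Finset.sum_congr rfl (fun v _ => h1 v), Finset.sum_add_distrib]
    simp
  have hMf : ∀ (x : V → ℝ) (i : ZMod (r + 2)), i ≠ 0 →
      (adjMat E).mulVec x (f i) = x (f (i + 1)) := by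
    intro x i hi
    rw [hmv]
    exact hsum_one x (f (i + 1)) _ (fun v => by rw [hEf i v]; simp [hi])
  have hMg : ∀ (x : V → ℝ) (j : ZMod (s + 2)), j ≠ 0 →
      (adjMat E).mulVec x (g j) = x (g (j + 1)) := by
    intro x j hj
    rw [hmv]
    exact hsum_one x (g (j + 1)) _ (fun v => by rw [hEg j v]; simp [hj])
  have hf1g1 : f 1 ≠ g 1 := fun hh => hone_r ((hfg_eq 1 1 hh).1)
  have hMz : ∀ (x : V → ℝ), (adjMat E).mulVec x (f 0) = x (f 1) + x (g 1) := by
    intro x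
    rw [hmv]
    refine hsum_two x (f 1) (g 1) hf1g1 _ (fun v => ?_)
    rw [hEf 0 v]
    simp
  have hmv_nonneg : ∀ (x : V → ℝ), (0 ≤ x) → ∀ u, 0 ≤ (adjMat E).mulVec x u := by
    intro x hx u
    rw [hmv]
    apply Finset.sum_nonneg
    intro v _
    by_cases h : E u v
    · simpa [h] using hx v
    · simp [h]
  have hcover : ∀ u : V, (∃ i, u = f i) ∨ (∃ j, u = g j) := by
    intro u
    have hu : u ∈ Set.range f ∪ Set.range g := by rw [huniv]; trivial
    rcases hu with ⟨i, hi⟩ | ⟨j, hj⟩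
    · exact Or.inl ⟨i, hi.symm⟩
    · exact Or.inr ⟨j, hj.symm⟩
  have hg_notin : ∀ j : ZMod (s + 2), j ≠ 0 → g j ∉ Set.range f := by
    rintro j hj ⟨i, hi⟩
    exact hj (hfg_eq i j hi).2
  -- the Perron root
  obtain ⟨t, ht1, hteq⟩ := aux_exists_root (r + 2) (s + 2) (by omega) (by omega)
  have ht0 : (0 : ℝ) < t := by linarith
  -- the Perron eigenvector
  set F : ZMod (r + 2) → ℝ := fun i => if i = 0 then t ^ (r + s + 2) else t ^ (s + i.val)
    with hFdef
  set G : ZMod (s + 2) → ℝ := fun j => if j = 0 then t ^ (r + s + 2) else t ^ (r + j.val)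
    with hGdef
  set X : V → ℝ := Function.extend f F (Function.extend g G 0) with hXdef
  have hXf : ∀ i, X (f i) = F i := fun i => hfinj.extend_apply _ _ i
  have hXg : ∀ j, X (g j) = G j := by
    intro j
    by_cases hj : j = 0
    · rw [hj, ← hfg0, hXf]
      simp [hFdef, hGdef]
    · rw [hXdef, Function.extend_apply' _ _ _ (fun ⟨i, hi⟩ => hg_notin j hj ⟨i, hi⟩),
        hginj.extend_apply]
  have hXpos : ∀ u, 0 < X u := by
    intro u
    rcases hcover u with ⟨i, hi⟩ | ⟨j, hj⟩
    · rw [hi, hXf, hFdef]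
      by_cases h : i = 0 <;> simp [h] <;> positivity
    · rw [hj, hXg, hGdef]
      by_cases h : j = 0 <;> simp [h] <;> positivity
  have hXeig : ∀ u, (adjMat E).mulVec X u = t * X u := by
    have hzval : (adjMat E).mulVec X (f 0) = t * X (f 0) := by
      rw [hMz, hXf, hXg, hXf]
      simp only [hFdef, hGdef, if_pos rfl, if_neg hone_r, if_neg hone_s, ZMod.val_one]
      apply mul_left_cancel₀ (ne_of_gt ht0)
      have e2 : t ^ (r + s + 4) = t ^ (r + 2) + t ^ (s + 2) := by
        rw [show r + s + 4 = (r + 2) + (s + 2) from by omega]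
        exact hteq
      calc t * (t ^ (s + 1) + t ^ (r + 1)) = t ^ (s + 2) + t ^ (r + 2) := by ring
        _ = t ^ (r + s + 4) := by rw [e2]; ring
        _ = t * (t * t ^ (r + s + 2)) := by ring
    have hfval : ∀ i : ZMod (r + 2), i ≠ 0 → (adjMat E).mulVec X (f i) = t * X (f i) := by
      intro i hi
      rw [hMf X i hi, hXf, hXf]
      rcases aux_zmod_succ i with ⟨h1, h2⟩ | ⟨h1, h2⟩
      · rw [h1]
        simp only [hFdef, if_pos rfl, if_neg hi, h2]
        rw [show s + (r + 2 - 1) = s + r + 1 from by omega,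
          show r + s + 2 = (s + r + 1) + 1 from by omega, pow_succ]
        ring
      · simp only [hFdef, if_neg hi, if_neg h1, h2]
        rw [show s + (i.val + 1) = (s + i.val) + 1 from by omega, pow_succ]
        ring
    have hgval : ∀ j : ZMod (s + 2), j ≠ 0 → (adjMat E).mulVec X (g j) = t * X (g j) := by
      intro j hj
      rw [hMg X j hj, hXg, hXg]
      rcases aux_zmod_succ j with ⟨h1, h2⟩ | ⟨h1, h2⟩
      · rw [h1]
        simp only [hGdef, if_pos rfl, if_neg hj, h2]
        rw [show r + (s + 2 - 1) = r + s + 1 from by omega,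
          show r + s + 2 = (r + s + 1) + 1 from by omega, pow_succ]
        ring
      · simp only [hGdef, if_neg hj, if_neg h1, h2]
        rw [show r + (j.val + 1) = (r + j.val) + 1 from by omega, pow_succ]
        ring
    intro u
    rcases hcover u with ⟨i, hi⟩ | ⟨j, hj⟩
    · rw [hi]
      by_cases h : i = 0
      · rw [h]; exact hzval
      · exact hfval i h
    · rw [hj]
      by_cases h : j = 0
      · rw [h, ← hfg0]; exact hzval
      · exact hgval j h
  -- complex adjacency matrix
  set Ac : Matrix V V ℂ := (adjMat E).map (fun x : ℝ => (x : ℂ)) with hAc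
  have hmvc : ∀ (y : V → ℂ) u, Ac.mulVec y u = ∑ v, if E u v then y v else 0 := by
    intro y u
    simp only [hAc, adjMat, Matrix.mulVec, dotProduct, Matrix.map_apply, Matrix.of_apply,
      apply_ite (fun x : ℝ => (x : ℂ)), Complex.ofReal_one, Complex.ofReal_zero, ite_mul,
      one_mul, zero_mul]
  have hcast : ∀ u, Ac.mulVec (fun v => (X v : ℂ)) u = ((adjMat E).mulVec X u : ℂ) := by
    intro u
    rw [hmvc, hmv]
    rw [Complex.ofReal_sum]
    apply Finset.sum_congr rfl
    intro v _
    by_cases h : E u v <;> simp [h]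
  have ht_spec : (t : ℂ) ∈ spectrum ℂ Ac := by
    rw [spectrum.mem_iff]
    intro hunit
    have hdet := (Matrix.isUnit_iff_isUnit_det _).mp hunit
    have hker : ∃ v ≠ 0, (algebraMap ℂ (Matrix V V ℂ) (t : ℂ) - Ac).mulVec v = 0 := by
      refine ⟨fun u => (X u : ℂ), ?_, ?_⟩
      · intro hcon
        have h1 := congrFun hcon (f 0)
        simp only [Pi.zero_apply, Complex.ofReal_eq_zero] at h1
        exact absurd h1 (ne_of_gt (hXpos (f 0)))
      · funext u
        rw [Matrix.sub_mulVec]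
        simp only [Pi.sub_apply, Pi.zero_apply]
        rw [Algebra.algebraMap_eq_smul_one, Matrix.smul_mulVec, Matrix.one_mulVec]
        rw [hcast u, hXeig u]
        simp only [Pi.smul_apply, smul_eq_mul]
        push_cast
        ring
    rw [Matrix.exists_mulVec_eq_zero_iff] at hker
    rw [hker] at hdet
    exact zero_ne_one (isUnit_zero_iff.mp hdet)
  have hbound : ∀ μ ∈ spectrum ℂ Ac, ‖μ‖ ≤ t := by
    intro μ hμ
    rw [spectrum.mem_iff] at hμ
    have hdet : (algebraMap ℂ (Matrix V V ℂ) μ - Ac).det = 0 := by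
      by_contra hd
      exact hμ ((Matrix.isUnit_iff_isUnit_det _).mpr (isUnit_iff_ne_zero.mpr hd))
    obtain ⟨y, hy0, hy⟩ := (Matrix.exists_mulVec_eq_zero_iff).mpr hdet
    have heig : ∀ u, Ac.mulVec y u = μ * y u := by
      intro u
      have h1 := congrFun hy u
      rw [Matrix.sub_mulVec] at h1
      simp only [Pi.sub_apply, Pi.zero_apply] at h1
      rw [Algebra.algebraMap_eq_smul_one, Matrix.smul_mulVec, Matrix.one_mulVec] at h1
      simp only [Pi.smul_apply, smul_eq_mul] at h1
      have h2 := sub_eq_zero.mp h1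
      rw [← h2]
    obtain ⟨u0, -, hmax⟩ := Finset.exists_max_image Finset.univ
      (fun u => ‖y u‖ / X u) ⟨f 0, Finset.mem_univ _⟩
    set c := ‖y u0‖ / X u0 with hcdef
    have hcX : ∀ v, ‖y v‖ ≤ c * X v := by
      intro v
      have h1 := hmax v (Finset.mem_univ v)
      exact (div_le_iff₀ (hXpos v)).mp h1
    have hcpos : 0 < c := by
      obtain ⟨v, hv⟩ : ∃ v, y v ≠ 0 := by
        by_contra hall
        push_neg at hall
        exact hy0 (funext hall)
      have h1 : 0 < ‖y v‖ := norm_pos_iff.mpr hv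
      have h2 : 0 < ‖y v‖ / X v := div_pos h1 (hXpos v)
      have h3 := hmax v (Finset.mem_univ v)
      linarith
    have hcu0 : c * X u0 = ‖y u0‖ := by
      rw [hcdef]
      exact div_mul_cancel₀ _ (ne_of_gt (hXpos u0))
    have hyu0 : 0 < ‖y u0‖ := by
      rw [← hcu0]
      exact mul_pos hcpos (hXpos u0)
    have h1 : ‖Ac.mulVec y u0‖ ≤ c * ((adjMat E).mulVec X u0) := by
      rw [hmvc, hmv]
      calc ‖∑ v, if E u0 v then y v else 0‖
          ≤ ∑ v, ‖if E u0 v then y v else 0‖ :=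
            norm_sum_le _ _
        _ ≤ ∑ v, c * (if E u0 v then X v else 0) := by
            apply Finset.sum_le_sum
            intro v _
            by_cases h : E u0 v
            · simpa [h] using hcX v
            · simp [h]
        _ = c * ∑ v, (if E u0 v then X v else 0) := by rw [Finset.mul_sum]
    rw [heig u0, norm_mul] at h1
    have h2 : ‖μ‖ * ‖y u0‖ ≤ t * ‖y u0‖ := by
      calc ‖μ‖ * ‖y u0‖ ≤ c * ((adjMat E).mulVec X u0) := h1
        _ = c * (t * X u0) := by rw [hXeig]
        _ = t * (c * X u0) := by ring
        _ = t * ‖y u0‖ := by rw [hcu0]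
    exact le_of_mul_le_mul_right h2 hyu0
  have hrho : rho E = t := by
    rw [rho, matSpecRad]
    have hmem : t ∈ {x : ℝ | ∃ μ ∈ spectrum ℂ ((adjMat E).map (fun x : ℝ => (x : ℂ))),
        x = ‖μ‖} := ⟨(t : ℂ), ht_spec, by rw [Complex.norm_real, Real.norm_eq_abs, abs_of_pos ht0]⟩
    have hub : ∀ b ∈ {x : ℝ | ∃ μ ∈ spectrum ℂ ((adjMat E).map (fun x : ℝ => (x : ℂ))),
        x = ‖μ‖}, b ≤ t := by
      rintro b ⟨μ, hμ, rfl⟩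
      exact hbound μ hμ
    exact le_antisymm (csSup_le ⟨t, hmem⟩ hub) (le_csSup ⟨t, hub⟩ hmem)
  -- membership of 0
  have h0mem : (0 : ℝ) ∈ compSpec (adjMat E) := by
    refine ⟨fun u => if u = f 0 then 1 else 0, ?_, ?_, ?_, ?_⟩
    · intro hcon
      have h1 := congrFun hcon (f 0)
      simp at h1
    · intro u
      dsimp
      split <;> norm_num
    · intro u
      simp only [zero_smul, sub_zero, Pi.zero_apply]
      exact hmv_nonneg _ (fun v => by dsimp; split <;> norm_num) u
    · simp only [zero_smul, sub_zero]
      rw [dotProduct]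
      have h1 : ∀ u, (if u = f 0 then (1:ℝ) else 0) * (adjMat E).mulVec
          (fun u => if u = f 0 then (1:ℝ) else 0) u =
          (if u = f 0 then (adjMat E).mulVec (fun u => if u = f 0 then (1:ℝ) else 0) u else 0) := by
        intro u
        split <;> ring
      rw [Finset.sum_congr rfl (fun u _ => h1 u)]
      rw [Finset.sum_ite_eq' Finset.univ (f 0)]
      simp only [Finset.mem_univ, if_pos]
      rw [hMz]
      have hf1 : f 1 ≠ f 0 := fun hh => hone_r (hfinj hh)
      have hg1 : g 1 ≠ f 0 := fun hh => hone_s (hginj (by rw [hh, hfg0]))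
      rw [if_neg hf1, if_neg hg1]
      norm_num
  -- membership of 1
  have h1mem : (1 : ℝ) ∈ compSpec (adjMat E) := by
    set x1 : V → ℝ := fun u => if u ∈ Set.range f then 1 else 0 with hx1def
    have hx1f : ∀ i, x1 (f i) = 1 := by
      intro i
      simp [hx1def]
    have hx1g : ∀ j, j ≠ 0 → x1 (g j) = 0 := by
      intro j hj
      simp only [hx1def]
      rw [if_neg (hg_notin j hj)]
    have hmv1 : ∀ i, (adjMat E).mulVec x1 (f i) = 1 := by
      intro i
      by_cases h : i = 0
      · rw [h, hMz, hx1f, hx1g 1 hone_s]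
        norm_num
      · rw [hMf x1 i h, hx1f]
    refine ⟨x1, ?_, ?_, ?_, ?_⟩
    · intro hcon
      have h1 := congrFun hcon (f 0)
      rw [hx1f 0] at h1
      norm_num at h1
    · intro u
      simp only [hx1def]
      split <;> norm_num
    · intro u
      simp only [Pi.sub_apply, Pi.smul_apply, smul_eq_mul, one_mul, Pi.zero_apply]
      rcases hcover u with ⟨i, hi⟩ | ⟨j, hj⟩
      · rw [hi, hmv1, hx1f]
        norm_num
      · by_cases h : j = 0
        · rw [hj, h, ← hfg0, hmv1, hx1f]
          norm_num
        · rw [hj, hx1g j h, sub_zero]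
          exact hmv_nonneg x1 (fun v => by simp only [hx1def]; split <;> norm_num) _
    · rw [dotProduct]
      apply Finset.sum_eq_zero
      intro u _
      rcases hcover u with ⟨i, hi⟩ | ⟨j, hj⟩
      · rw [hi]
        simp only [Pi.sub_apply, Pi.smul_apply, smul_eq_mul, one_mul]
        rw [hmv1, hx1f]
        ring
      · by_cases h : j = 0
        · rw [hj, h, ← hfg0]
          simp only [Pi.sub_apply, Pi.smul_apply, smul_eq_mul, one_mul]
          rw [hmv1, hx1f]
          ring
        · rw [hj, hx1g j h]
          ring
  -- membership of t
  have htmem : t ∈ compSpec (adjMat E) := by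
    have hsub0 : (adjMat E).mulVec X - t • X = 0 := by
      funext u
      simp only [Pi.sub_apply, Pi.smul_apply, smul_eq_mul, Pi.zero_apply, hXeig u, sub_self]
    refine ⟨X, ?_, fun u => (hXpos u).le, ?_, ?_⟩
    · intro hcon
      have h1 := congrFun hcon (f 0)
      exact absurd h1 (ne_of_gt (hXpos (f 0)))
    · rw [hsub0]
    · rw [hsub0]
      simp [dotProduct]
  -- forward inclusion
  have hforward : ∀ lam ∈ compSpec (adjMat E), lam = 0 ∨ lam = 1 ∨ lam = t := by
    rintro lam ⟨x, hx0, hxnn, hineq, hcomp⟩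
    have hxnn' : ∀ u, 0 ≤ x u := fun u => hxnn u
    have hd : ∀ u, 0 ≤ (adjMat E).mulVec x u - lam * x u := by
      intro u
      have h1 := hineq u
      simpa using h1
    have hsupp : ∀ u, 0 < x u → (adjMat E).mulVec x u = lam * x u := by
      intro u hu
      have hz : ∀ v ∈ Finset.univ, 0 ≤ x v * ((adjMat E).mulVec x v - lam * x v) :=
        fun v _ => mul_nonneg (hxnn' v) (hd v)
      have hsum : ∑ v, x v * ((adjMat E).mulVec x v - lam * x v) = 0 := by
        rw [← hcomp, dotProduct]
        apply Finset.sum_congr rfl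
        intro v _
        simp [smul_eq_mul]
      have h1 := (Finset.sum_eq_zero_iff_of_nonneg hz).mp hsum u (Finset.mem_univ u)
      rcases mul_eq_zero.mp h1 with h2 | h2
      · exact absurd h2 (ne_of_gt hu)
      · linarith
    obtain ⟨u₁, hu₁⟩ : ∃ u, 0 < x u := by
      by_contra hall
      push_neg at hall
      exact hx0 (funext fun u => le_antisymm (hall u) (hxnn' u))
    have hlam0 : 0 ≤ lam := by
      have h1 := hsupp u₁ hu₁
      have h2 := hmv_nonneg x hxnn u₁
      nlinarith
    rcases eq_or_lt_of_le hlam0 with h0 | hlam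
    · exact Or.inl h0.symm
    right
    have stepf : ∀ i : ZMod (r + 2), i ≠ 0 → 0 < x (f i) → 0 < x (f (i + 1)) := by
      intro i hi hxi
      have h1 := hsupp (f i) hxi
      rw [hMf x i hi] at h1
      rw [h1]
      positivity
    have stepg : ∀ j : ZMod (s + 2), j ≠ 0 → 0 < x (g j) → 0 < x (g (j + 1)) := by
      intro j hj hxj
      have h1 := hsupp (g j) hxj
      rw [hMg x j hj] at h1
      rw [h1]
      positivity
    have hz_pos : 0 < x (f 0) := by
      rcases hcover u₁ with ⟨i, hi⟩ | ⟨j, hj⟩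
      · exact aux_reach_zero f x stepf _ i (aux_add_sub_val i) (by rwa [hi] at hu₁)
      · have h1 := aux_reach_zero g x stepg _ j (aux_add_sub_val j) (by rwa [hj] at hu₁)
        rwa [← hfg0] at h1
    have hzeq : x (f 1) + x (g 1) = lam * x (f 0) := by
      rw [← hMz x]
      exact hsupp (f 0) hz_pos
    have chstepf : ∀ i : ZMod (r + 2), i ≠ 0 → 0 < x (f i) → x (f (i + 1)) = lam * x (f i) := by
      intro i hi hxi
      rw [← hMf x i hi]
      exact hsupp (f i) hxi
    have chstepg : ∀ j : ZMod (s + 2), j ≠ 0 → 0 < x (g j) → x (g (j + 1)) = lam * x (g j) := by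
      intro j hj hxj
      rw [← hMg x j hj]
      exact hsupp (g j) hxj
    have chainf : 0 < x (f 1) → x (f 0) = lam ^ (r + 1) * x (f 1) := by
      intro h1
      have h2 := aux_chain_full (n := r + 2) (by omega) f x lam hlam h1 chstepf
      rwa [show r + 2 - 1 = r + 1 from by omega] at h2
    have chaing : 0 < x (g 1) → x (f 0) = lam ^ (s + 1) * x (g 1) := by
      intro h1
      have h2 := aux_chain_full (n := s + 2) (by omega) g x lam hlam h1 chstepg
      rw [show s + 2 - 1 = s + 1 from by omega] at h2
      rwa [← hfg0] at h2
    by_cases hp : 0 < x (f 1)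
    · by_cases hq : 0 < x (g 1)
      · right
        have e1 := chainf hp
        have e2 := chaing hq
        have h2 : (lam ^ (s + 1) + lam ^ (r + 1)) * x (f 0) =
            (lam ^ (r + 1) * lam ^ (s + 1) * lam) * x (f 0) := by
          calc (lam ^ (s + 1) + lam ^ (r + 1)) * x (f 0)
              = lam ^ (s + 1) * (lam ^ (r + 1) * x (f 1)) +
                lam ^ (r + 1) * (lam ^ (s + 1) * x (g 1)) := by rw [← e1, ← e2]; ring
            _ = lam ^ (r + 1) * lam ^ (s + 1) * (x (f 1) + x (g 1)) := by ring
            _ = lam ^ (r + 1) * lam ^ (s + 1) * (lam * x (f 0)) := by rw [hzeq]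
            _ = (lam ^ (r + 1) * lam ^ (s + 1) * lam) * x (f 0) := by ring
        have h3 := mul_right_cancel₀ (ne_of_gt hz_pos) h2
        have heqlam : lam ^ ((r + 2) + (s + 2)) = lam ^ (r + 2) + lam ^ (s + 2) := by
          have h4 : lam * (lam ^ (s + 1) + lam ^ (r + 1)) =
              lam * (lam ^ (r + 1) * lam ^ (s + 1) * lam) := by rw [h3]
          calc lam ^ ((r + 2) + (s + 2)) = lam * (lam ^ (r + 1) * lam ^ (s + 1) * lam) := by ring
            _ = lam * (lam ^ (s + 1) + lam ^ (r + 1)) := h4.symm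
            _ = lam ^ (r + 2) + lam ^ (s + 2) := by ring
        exact aux_root_unique (by omega) (by omega)
          (aux_root_gt_one (by omega) (by omega) hlam heqlam) ht1 heqlam hteq
      · left
        have hq0 : x (g 1) = 0 := le_antisymm (not_lt.mp hq) (hxnn' _)
        have hfp : x (f 1) = lam * x (f 0) := by rw [← hzeq, hq0]; ring
        have e1 := chainf hp
        rw [hfp] at e1
        have h2 : lam ^ (r + 2) = 1 := by
          have h3 : (lam ^ (r + 2) - 1) * x (f 0) = 0 := by
            calc (lam ^ (r + 2) - 1) * x (f 0)
                = lam ^ (r + 1) * (lam * x (f 0)) - x (f 0) := by ring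
              _ = 0 := by rw [← e1]; ring
          rcases mul_eq_zero.mp h3 with h4 | h4
          · linarith [sub_eq_zero.mp h4]
          · exact absurd h4 (ne_of_gt hz_pos)
        exact aux_pow_one hlam (by omega) h2
    · left
      have hp0 : x (f 1) = 0 := le_antisymm (not_lt.mp hp) (hxnn' _)
      have hgp : x (g 1) = lam * x (f 0) := by rw [← hzeq, hp0]; ring
      have hq : 0 < x (g 1) := by rw [hgp]; positivity
      have e1 := chaing hq
      rw [hgp] at e1
      have h2 : lam ^ (s + 2) = 1 := by
        have h3 : (lam ^ (s + 2) - 1) * x (f 0) = 0 := by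
          calc (lam ^ (s + 2) - 1) * x (f 0)
              = lam ^ (s + 1) * (lam * x (f 0)) - x (f 0) := by ring
            _ = 0 := by rw [← e1]; ring
        rcases mul_eq_zero.mp h3 with h4 | h4
        · linarith [sub_eq_zero.mp h4]
        · exact absurd h4 (ne_of_gt hz_pos)
      exact aux_pow_one hlam (by omega) h2
  -- assembly
  have hset : compSpec (adjMat E) = {0, 1, t} := by
    ext lam
    constructor
    · intro hl
      rcases hforward lam hl with h | h | h <;> simp [h]
    · intro hl
      rcases hl with h | h | h
      · rw [h]; exact h0mem
      · rw [h]; exact h1mem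
      · rw [Set.mem_singleton_iff.mp h]; exact htmem
  refine ⟨by rw [hrho]; exact hset, by rw [hrho]; exact ht1, ?_⟩
  rw [hset, Set.ncard_eq_three]
  exact ⟨0, 1, t, by norm_num, by intro hh; rw [← hh] at ht0; norm_num at ht0,
    by intro hh; rw [← hh] at ht1; norm_num at ht1, rfl⟩
end
end

section
/- The θ-digraph θ(a,b,c) has complementarity spectrum {0, 1, ρ(θ(a,b,c))}, where ρ(θ(a,b,c)) > 1; in particular it has exactly three complementarity eigenvalues. -/
open Matrix
open scoped Classical

noncomputable section

lemma spec_iff_eig {n : Type*} [Fintype n] [DecidableEq n] (M : Matrix n n ℂ) (μ : ℂ) :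
    μ ∈ spectrum ℂ M ↔ ∃ y : n → ℂ, y ≠ 0 ∧ M.mulVec y = μ • y := by
  rw [spectrum.mem_iff]
  constructor
  · intro h
    have hdet : (algebraMap ℂ (Matrix n n ℂ) μ - M).det = 0 := by
      by_contra hd
      exact h ((Matrix.isUnit_iff_isUnit_det _).2 (isUnit_iff_ne_zero.2 hd))
    obtain ⟨y, hy0, hy⟩ := (Matrix.exists_mulVec_eq_zero_iff).2 hdet
    refine ⟨y, hy0, ?_⟩
    rw [Matrix.sub_mulVec] at hy
    have halg : (algebraMap ℂ (Matrix n n ℂ) μ).mulVec y = μ • y := by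
      rw [Algebra.algebraMap_eq_smul_one, Matrix.smul_mulVec, Matrix.one_mulVec]
    rw [halg] at hy
    exact (sub_eq_zero.mp hy).symm
  · rintro ⟨y, hy0, hy⟩ hu
    have hdet : (algebraMap ℂ (Matrix n n ℂ) μ - M).det ≠ 0 :=
      isUnit_iff_ne_zero.1 ((Matrix.isUnit_iff_isUnit_det _).1 hu)
    apply hdet
    rw [← Matrix.exists_mulVec_eq_zero_iff]
    refine ⟨y, hy0, ?_⟩
    rw [Matrix.sub_mulVec, hy, Algebra.algebraMap_eq_smul_one, Matrix.smul_mulVec,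
      Matrix.one_mulVec, sub_self]

lemma ratio_bound {V : Type*} [Fintype V] [Nonempty V] (A : Matrix V V ℝ)
    (hA : ∀ i j, 0 ≤ A i j) (z x : V → ℝ) (hx : ∀ i, 0 < x i)
    (i1 : V) (hz1 : 0 < z i1) (α β : ℝ)
    (hαz : ∀ i, α * z i ≤ A.mulVec z i) (hβx : A.mulVec x = β • x) : α ≤ β := by
  obtain ⟨i0, -, hi0⟩ := Finset.exists_max_image Finset.univ (fun i => z i / x i)
    ⟨i1, Finset.mem_univ i1⟩
  set t := z i0 / x i0 with ht
  have htpos : 0 < t := lt_of_lt_of_le (div_pos hz1 (hx i1)) (hi0 i1 (Finset.mem_univ i1))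
  have hle : ∀ j, z j ≤ t * x j := by
    intro j
    have h := hi0 j (Finset.mem_univ j)
    calc z j = z j / x j * x j := by rw [div_mul_cancel₀ _ (hx j).ne']
    _ ≤ t * x j := mul_le_mul_of_nonneg_right h (hx j).le
  have h1 : α * z i0 ≤ t * (β * x i0) := by
    calc α * z i0 ≤ A.mulVec z i0 := hαz i0
    _ ≤ A.mulVec (fun j => t * x j) i0 := by
        unfold Matrix.mulVec dotProduct
        exact Finset.sum_le_sum fun j _ => mul_le_mul_of_nonneg_left (hle j) (hA i0 j)
    _ = t * A.mulVec x i0 := by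
        unfold Matrix.mulVec dotProduct
        rw [Finset.mul_sum]; exact Finset.sum_congr rfl fun j _ => by ring
    _ = t * (β * x i0) := by rw [hβx]; simp [Pi.smul_apply]
  have hz0 : z i0 = t * x i0 := by rw [ht, div_mul_cancel₀ _ (hx i0).ne']
  rw [hz0] at h1
  have hpos : 0 < t * x i0 := mul_pos htpos (hx i0)
  nlinarith [hpos]

/-- mulVec of an adjacency matrix as a sum of an `ite`. -/
lemma adj_mulVec {V : Type*} [Fintype V] (E : V → V → Prop) (x : V → ℝ) (u : V) :
    (adjMat E).mulVec x u = ∑ w, if E u w then x w else 0 := by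
  unfold adjMat Matrix.mulVec dotProduct
  refine Finset.sum_congr rfl fun w _ => ?_
  by_cases h : E u w <;> simp [h]

lemma adj_mulVec_single {V : Type*} [Fintype V] {E : V → V → Prop} {x : V → ℝ} {u w : V}
    (h : ∀ w', E u w' ↔ w' = w) : (adjMat E).mulVec x u = x w := by
  rw [adj_mulVec]
  have : ∀ w', (if E u w' then x w' else 0) = if w' = w then x w' else 0 := by
    intro w'; by_cases hw : w' = w
    · simp [hw, (h w).2 rfl]
    · rw [if_neg (fun hh => hw ((h w').1 hh)), if_neg hw]
  rw [Finset.sum_congr rfl fun w' _ => this w', Finset.sum_ite_eq' Finset.univ w x]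
  simp

lemma adj_mulVec_pair {V : Type*} [Fintype V] {E : V → V → Prop} {x : V → ℝ} {u w₁ w₂ : V}
    (hne : w₁ ≠ w₂) (h : ∀ w', E u w' ↔ w' = w₁ ∨ w' = w₂) :
    (adjMat E).mulVec x u = x w₁ + x w₂ := by
  rw [adj_mulVec]
  have : ∀ w', (if E u w' then x w' else 0)
      = (if w' = w₁ then x w' else 0) + (if w' = w₂ then x w' else 0) := by
    intro w'
    by_cases h1 : w' = w₁
    · subst h1; simp [hne, (h w').2 (Or.inl rfl)]
    · by_cases h2 : w' = w₂
      · subst h2; simp [h1, (h w').2 (Or.inr rfl)]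
      · rw [if_neg (fun hh => ((h w').1 hh).elim h1 h2), if_neg h1, if_neg h2, add_zero]
  rw [Finset.sum_congr rfl fun w' _ => this w', Finset.sum_add_distrib,
    Finset.sum_ite_eq' Finset.univ w₁ x, Finset.sum_ite_eq' Finset.univ w₂ x]
  simp

lemma adj_mulVec_nonneg {V : Type*} [Fintype V] (E : V → V → Prop) (x : V → ℝ)
    (hx : ∀ u, 0 ≤ x u) (u : V) : 0 ≤ (adjMat E).mulVec x u := by
  rw [adj_mulVec]
  refine Finset.sum_nonneg fun w _ => ?_
  by_cases h : E u w <;> simp [h, hx w]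

theorem theta_core {V : Type*} [Fintype V] {E : V → V → Prop} {a b c : ℕ}
    (hab : a ≤ b) (hb : 0 < b)
    {P : Fin (a + 2) → V} {Q : Fin (b + 2) → V} {R : Fin (c + 2) → V}
    (hP : Function.Injective P) (hQ : Function.Injective Q) (hR : Function.Injective R)
    (hPQ0 : P 0 = Q 0) (hQR0 : Q 0 = R (Fin.last (c + 1)))
    (hPl : P (Fin.last (a + 1)) = Q (Fin.last (b + 1))) (hQl : Q (Fin.last (b + 1)) = R 0)
    (hPQ : ∀ i j, P i = Q j → (i = 0 ∧ j = 0) ∨ (i = Fin.last (a + 1) ∧ j = Fin.last (b + 1)))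
    (hPR : ∀ i j, P i = R j → (i = 0 ∧ j = Fin.last (c + 1)) ∨ (i = Fin.last (a + 1) ∧ j = 0))
    (hQR : ∀ i j, Q i = R j → (i = 0 ∧ j = Fin.last (c + 1)) ∨ (i = Fin.last (b + 1) ∧ j = 0))
    (hcov : Set.range P ∪ Set.range Q ∪ Set.range R = Set.univ)
    (hE : ∀ u w, E u w ↔
      ((∃ i : Fin (a + 1), u = P i.castSucc ∧ w = P i.succ) ∨
       (∃ i : Fin (b + 1), u = Q i.castSucc ∧ w = Q i.succ) ∨
       (∃ i : Fin (c + 1), u = R i.castSucc ∧ w = R i.succ))) :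
    compSpec (adjMat E) = {0, 1, rho E} ∧ 1 < rho E ∧ (compSpec (adjMat E)).ncard = 3 := by
  haveI : Nonempty V := ⟨P 0⟩
  set v := P 0 with hvdef
  -- basic Fin facts
  have hlastP0 : (0 : Fin (a + 2)) ≠ Fin.last (a + 1) := by
    intro h
    have := congrArg Fin.val h
    simp only [Fin.val_zero, Fin.val_last] at this
    omega
  have hlastQ0 : (0 : Fin (b + 2)) ≠ Fin.last (b + 1) := by
    intro h
    have := congrArg Fin.val h
    simp only [Fin.val_zero, Fin.val_last] at this
    omega
  have hlastR0 : (0 : Fin (c + 2)) ≠ Fin.last (c + 1) := by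
    intro h
    have := congrArg Fin.val h
    simp only [Fin.val_zero, Fin.val_last] at this
    omega
  have h1Q : (1 : Fin (b + 2)) ≠ Fin.last (b + 1) := by
    intro h
    have := congrArg Fin.val h
    simp only [Fin.val_one, Fin.val_last] at this
    omega
  -- v equals various endpoints
  have hvQ : v = Q 0 := hPQ0
  have hvR : v = R (Fin.last (c + 1)) := hPQ0.trans hQR0
  have hPlR : P (Fin.last (a + 1)) = R 0 := hPl.trans hQl
  -- cross-path interior facts
  have hPnQ : ∀ (i : Fin (a + 1)) (j : Fin (b + 1)),
      P i.castSucc = Q j.castSucc → P i.castSucc = v := by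
    intro i j h
    rcases hPQ _ _ h with ⟨hi0, _⟩ | ⟨hil, _⟩
    · rw [hi0]
    · exact absurd hil (Fin.castSucc_lt_last i).ne
  have hPnR : ∀ (i : Fin (a + 1)) (j : Fin (c + 1)), P i.castSucc ≠ R j.castSucc := by
    intro i j h
    rcases hPR _ _ h with ⟨_, hjl⟩ | ⟨hil, _⟩
    · exact (Fin.castSucc_lt_last j).ne hjl
    · exact (Fin.castSucc_lt_last i).ne hil
  have hQnR : ∀ (i : Fin (b + 1)) (j : Fin (c + 1)), Q i.castSucc ≠ R j.castSucc := by
    intro i j h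
    rcases hQR _ _ h with ⟨_, hjl⟩ | ⟨hil, _⟩
    · exact (Fin.castSucc_lt_last j).ne hjl
    · exact (Fin.castSucc_lt_last i).ne hil
  -- uniqueness of out-neighbours away from v
  have huniq : ∀ u w₁ w₂, u ≠ v → E u w₁ → E u w₂ → w₁ = w₂ := by
    intro u w₁ w₂ hu h1 h2
    rw [hE] at h1 h2
    rcases h1 with ⟨i, hi, hw1⟩ | ⟨i, hi, hw1⟩ | ⟨i, hi, hw1⟩ <;>
      rcases h2 with ⟨j, hj, hw2⟩ | ⟨j, hj, hw2⟩ | ⟨j, hj, hw2⟩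
    · rw [hw1, hw2, Fin.castSucc_inj.mp (hP (hi.symm.trans hj))]
    · exact absurd (hPnQ i j (hi.symm.trans hj)) (hi ▸ hu)
    · exact absurd (hi.symm.trans hj) (hPnR i j)
    · exact absurd (hPnQ j i (hj.symm.trans hi)) (hj ▸ hu)
    · rw [hw1, hw2, Fin.castSucc_inj.mp (hQ (hi.symm.trans hj))]
    · exact absurd (hi.symm.trans hj) (hQnR i j)
    · exact absurd (hj.symm.trans hi) (hPnR j i)
    · exact absurd (hj.symm.trans hi) (hQnR j i)
    · rw [hw1, hw2, Fin.castSucc_inj.mp (hR (hi.symm.trans hj))]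
  -- existence of out-neighbours
  have hex : ∀ u, ∃ w, E u w := by
    intro u
    have hu : u ∈ Set.range P ∪ Set.range Q ∪ Set.range R := by rw [hcov]; trivial
    have hstepP : ∀ i : Fin (a + 2), i ≠ Fin.last (a + 1) → ∃ w, E (P i) w := by
      intro i hi
      obtain ⟨j, hj⟩ := Fin.exists_castSucc_eq.mpr hi
      exact ⟨P j.succ, (hE _ _).2 (Or.inl ⟨j, by rw [hj], rfl⟩)⟩
    have hstepQ : ∀ i : Fin (b + 2), i ≠ Fin.last (b + 1) → ∃ w, E (Q i) w := by
      intro i hi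
      obtain ⟨j, hj⟩ := Fin.exists_castSucc_eq.mpr hi
      exact ⟨Q j.succ, (hE _ _).2 (Or.inr (Or.inl ⟨j, by rw [hj], rfl⟩))⟩
    have hstepR : ∀ i : Fin (c + 2), i ≠ Fin.last (c + 1) → ∃ w, E (R i) w := by
      intro i hi
      obtain ⟨j, hj⟩ := Fin.exists_castSucc_eq.mpr hi
      exact ⟨R j.succ, (hE _ _).2 (Or.inr (Or.inr ⟨j, by rw [hj], rfl⟩))⟩
    rcases hu with (⟨i, rfl⟩ | ⟨i, rfl⟩) | ⟨i, rfl⟩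
    · by_cases hi : i = Fin.last (a + 1)
      · subst hi; rw [hPlR]; exact hstepR 0 hlastR0
      · exact hstepP i hi
    · by_cases hi : i = Fin.last (b + 1)
      · subst hi; rw [hQl]; exact hstepR 0 hlastR0
      · exact hstepQ i hi
    · by_cases hi : i = Fin.last (c + 1)
      · subst hi; rw [← hvR, hvdef]; exact hstepP 0 hlastP0
      · exact hstepR i hi
  -- out-neighbours of v
  have hvE : ∀ w, E v w ↔ w = P 1 ∨ w = Q 1 := by
    intro w
    constructor
    · intro h
      rw [hE] at h
      rcases h with ⟨i, hi, hw⟩ | ⟨i, hi, hw⟩ | ⟨i, hi, hw⟩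
      · have : i = 0 := Fin.castSucc_eq_zero_iff.mp (hP hi.symm)
        subst this; rw [hw, Fin.succ_zero_eq_one]; exact Or.inl rfl
      · have hQ0 : Q 0 = Q i.castSucc := hvQ.symm.trans hi
        have : i = 0 := Fin.castSucc_eq_zero_iff.mp (hQ hQ0).symm
        subst this; rw [hw, Fin.succ_zero_eq_one]; exact Or.inr rfl
      · have : R (Fin.last (c + 1)) = R i.castSucc := hvR.symm.trans hi
        exact absurd (hR this).symm (Fin.castSucc_lt_last i).ne
    · rintro (rfl | rfl)
      · exact (hE _ _).2 (Or.inl ⟨0, by rw [Fin.castSucc_zero], by rw [Fin.succ_zero_eq_one]⟩)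
      · exact (hE _ _).2 (Or.inr (Or.inl ⟨0, by rw [Fin.castSucc_zero, ← hvQ],
          by rw [Fin.succ_zero_eq_one]⟩))
  have hP1Q1 : P 1 ≠ Q 1 := by
    intro h
    rcases hPQ 1 1 h with ⟨_, h10⟩ | ⟨_, h1l⟩
    · exact one_ne_zero h10
    · exact h1Q h1l
  -- mulVec formulas
  have hmv : ∀ (x : V → ℝ) u w, u ≠ v → E u w → (adjMat E).mulVec x u = x w := by
    intro x u w hu hw
    exact adj_mulVec_single fun w' => ⟨fun h => huniq u w' w hu h hw, fun h => h ▸ hw⟩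
  have hmvv : ∀ (x : V → ℝ), (adjMat E).mulVec x v = x (P 1) + x (Q 1) :=
    fun x => adj_mulVec_pair hP1Q1 hvE
  -- the Perron root
  obtain ⟨lam0, hlam0m, hlam0f⟩ :
      ∃ t : ℝ, t ∈ Set.Icc (1:ℝ) 2 ∧ t ^ (b + c + 2) - t ^ (b - a) - 1 = 0 := by
    have hcont : ContinuousOn (fun t : ℝ => t ^ (b + c + 2) - t ^ (b - a) - 1) (Set.Icc 1 2) :=
      (((continuous_pow _).sub (continuous_pow _)).sub continuous_const).continuousOn
    have hsub := intermediate_value_Icc (by norm_num : (1:ℝ) ≤ 2) hcont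
    have hmem : (0:ℝ) ∈ Set.Icc ((1:ℝ) ^ (b + c + 2) - 1 ^ (b - a) - 1)
        ((2:ℝ) ^ (b + c + 2) - 2 ^ (b - a) - 1) := by
      constructor
      · norm_num
      · have h1 : (2:ℝ) ^ (b - a) ≤ 2 ^ (b + c + 1) :=
          pow_le_pow_right₀ (by norm_num) (by omega)
        have h2 : (2:ℝ) ^ (b + c + 2) = 2 * 2 ^ (b + c + 1) := by
          rw [pow_succ]; ring
        have h3 : (1:ℝ) ≤ 2 ^ (b + c + 1) := one_le_pow₀ (by norm_num)
        nlinarith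
    obtain ⟨t, ht, hft⟩ := hsub hmem
    exact ⟨t, ht, hft⟩
  have hlam1 : 1 < lam0 := by
    rcases lt_or_eq_of_le hlam0m.1 with h | h
    · exact h
    · exfalso; rw [← h] at hlam0f; norm_num at hlam0f
  have hlam0pos : 0 < lam0 := lt_trans one_pos hlam1
  have hroot : lam0 ^ (b + c + 2) = lam0 ^ (b - a) + 1 := by linarith
  -- the Perron vector
  set xs : V → ℝ := fun u =>
    if h : ∃ j, u = R j then lam0 ^ (b + 1 + (h.choose).val)
    else if h : ∃ i, u = P i then lam0 ^ (b - a + (h.choose).val)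
    else if h : ∃ i, u = Q i then lam0 ^ ((h.choose).val)
    else 0 with hxsdef
  have hxsR : ∀ j : Fin (c + 2), xs (R j) = lam0 ^ (b + 1 + j.val) := by
    intro j
    have hexj : ∃ j', R j = R j' := ⟨j, rfl⟩
    rw [hxsdef]
    simp only []
    rw [dif_pos hexj, ← hR hexj.choose_spec]
  have hxsP : ∀ i : Fin (a + 2), i ≠ 0 → xs (P i) = lam0 ^ (b - a + i.val) := by
    intro i hi0
    by_cases hil : i = Fin.last (a + 1)
    · subst hil
      rw [hPlR, hxsR 0]
      congr 1
      simp only [Fin.val_zero, Fin.val_last]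
      omega
    · have hnR : ¬ ∃ j, P i = R j := by
        rintro ⟨j, hj⟩
        rcases hPR i j hj with ⟨h1, _⟩ | ⟨h1, _⟩
        · exact hi0 h1
        · exact hil h1
      have hexi : ∃ i', P i = P i' := ⟨i, rfl⟩
      rw [hxsdef]
      simp only []
      rw [dif_neg hnR, dif_pos hexi, ← hP hexi.choose_spec]
  have hxsQ : ∀ i : Fin (b + 2), i ≠ 0 → xs (Q i) = lam0 ^ (i.val) := by
    intro i hi0
    by_cases hil : i = Fin.last (b + 1)
    · subst hil
      rw [hQl, hxsR 0]
      congr 1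
    · have hnR : ¬ ∃ j, Q i = R j := by
        rintro ⟨j, hj⟩
        rcases hQR i j hj with ⟨h1, _⟩ | ⟨h1, _⟩
        · exact hi0 h1
        · exact hil h1
      have hnP : ¬ ∃ i', Q i = P i' := by
        rintro ⟨i', hi'⟩
        rcases hPQ i' i hi'.symm with ⟨_, h1⟩ | ⟨_, h1⟩
        · exact hi0 h1
        · exact hil h1
      have hexi : ∃ i', Q i = Q i' := ⟨i, rfl⟩
      rw [hxsdef]
      simp only []
      rw [dif_neg hnR, dif_neg hnP, dif_pos hexi, ← hQ hexi.choose_spec]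
  have hxsv : xs v = lam0 ^ (b + c + 2) := by
    rw [hvR, hxsR]
    congr 1
    simp only [Fin.val_last]
    omega
  have hxspos : ∀ u, 0 < xs u := by
    intro u
    have hu : u ∈ Set.range P ∪ Set.range Q ∪ Set.range R := by rw [hcov]; trivial
    rcases hu with (⟨i, rfl⟩ | ⟨i, rfl⟩) | ⟨i, rfl⟩
    · by_cases hi : i = 0
      · subst hi; rw [← hvdef, hxsv]; exact pow_pos hlam0pos _
      · rw [hxsP i hi]; exact pow_pos hlam0pos _
    · by_cases hi : i = 0
      · subst hi; rw [← hvQ, hxsv]; exact pow_pos hlam0pos _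
      · rw [hxsQ i hi]; exact pow_pos hlam0pos _
    · rw [hxsR]; exact pow_pos hlam0pos _
  -- the eigen-equation
  have hxse : (adjMat E).mulVec xs = lam0 • xs := by
    funext u
    rw [Pi.smul_apply, smul_eq_mul]
    by_cases hu : u = v
    · subst hu
      rw [hmvv xs, hxsv, hxsP 1 one_ne_zero, hxsQ 1 one_ne_zero]
      have hv1 : ((1 : Fin (a + 2)) : ℕ) = 1 := Fin.val_one _
      have hv2 : ((1 : Fin (b + 2)) : ℕ) = 1 := Fin.val_one _
      rw [hv1, hv2, pow_succ, hroot]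
      ring
    · obtain ⟨w, hw⟩ := hex u
      rw [hmv xs u w hu hw]
      rw [hE] at hw
      rcases hw with ⟨i, hi, hw⟩ | ⟨i, hi, hw⟩ | ⟨i, hi, hw⟩
      · have hi0 : i.castSucc ≠ (0 : Fin (a + 2)) := fun h => hu (by rw [hi, h])
        rw [hi, hw, hxsP _ hi0, hxsP _ (Fin.succ_ne_zero i),
          Fin.coe_castSucc, Fin.val_succ]
        have he : b - a + (i.val + 1) = (b - a + i.val) + 1 := by omega
        rw [he, pow_succ]
        ring
      · have hi0 : i.castSucc ≠ (0 : Fin (b + 2)) := fun h => hu (by rw [hi, h, ← hvQ])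
        rw [hi, hw, hxsQ _ hi0, hxsQ _ (Fin.succ_ne_zero i),
          Fin.coe_castSucc, Fin.val_succ, pow_succ]
        ring
      · rw [hi, hw, hxsR, hxsR, Fin.coe_castSucc, Fin.val_succ]
        have he : b + 1 + (i.val + 1) = (b + 1 + i.val) + 1 := by omega
        rw [he, pow_succ]
        ring
  have hAnn : ∀ i j, 0 ≤ adjMat E i j := by
    intro i j
    unfold adjMat
    rw [Matrix.of_apply]
    by_cases h : E i j <;> simp [h]
  -- complexified mulVec
  have hmapmv : ∀ (z : V → ℝ) (u : V),
      ((adjMat E).map (fun x => (x : ℂ))).mulVec (fun w => (z w : ℂ)) u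
        = (((adjMat E).mulVec z u : ℝ) : ℂ) := by
    intro z u
    simp only [Matrix.mulVec, dotProduct, Matrix.map_apply]
    push_cast
    rfl
  have hspec : (lam0 : ℂ) ∈ spectrum ℂ ((adjMat E).map (fun x => (x : ℂ))) := by
    rw [spec_iff_eig]
    refine ⟨fun w => (xs w : ℂ), ?_, ?_⟩
    · intro h0
      have := congrFun h0 v
      simp only [Pi.zero_apply, Complex.ofReal_eq_zero] at this
      exact (hxspos v).ne' this
    · funext u
      rw [hmapmv xs u, hxse]
      simp [Pi.smul_apply, smul_eq_mul]
  have hub : ∀ r ∈ {r : ℝ | ∃ μ ∈ spectrum ℂ ((adjMat E).map (fun x => (x : ℂ))),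
      r = ‖μ‖}, r ≤ lam0 := by
    rintro r ⟨μ, hμ, rfl⟩
    obtain ⟨y, hy0, hy⟩ := (spec_iff_eig _ μ).1 hμ
    obtain ⟨i1, hi1⟩ := Function.ne_iff.1 hy0
    refine ratio_bound (adjMat E) hAnn (fun i => ‖y i‖) xs hxspos i1
      (norm_pos_iff.mpr hi1) _ lam0 ?_ hxse
    intro i
    have h1 : ‖μ‖ * ‖y i‖ = ‖(μ • y) i‖ := by
      rw [Pi.smul_apply, smul_eq_mul, norm_mul]
    rw [h1, ← hy]
    calc ‖((adjMat E).map (fun x => (x : ℂ))).mulVec y i‖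
        ≤ ∑ w, ‖((adjMat E).map (fun x => (x : ℂ))) i w * y w‖ := by
          unfold Matrix.mulVec dotProduct
          exact norm_sum_le _ _
    _ = ∑ w, adjMat E i w * ‖y w‖ := by
          refine Finset.sum_congr rfl fun w _ => ?_
          rw [norm_mul, Matrix.map_apply, Complex.norm_real, Real.norm_eq_abs, abs_of_nonneg (hAnn i w)]
    _ = (adjMat E).mulVec (fun w => ‖y w‖) i := rfl
  have hrho : rho E = lam0 := by
    unfold rho matSpecRad
    refine le_antisymm (csSup_le ⟨lam0, ⟨(lam0:ℂ), hspec, ?_⟩⟩ hub) (le_csSup ⟨lam0, hub⟩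
      ⟨(lam0:ℂ), hspec, ?_⟩)
    · rw [Complex.norm_real, Real.norm_eq_abs, abs_of_nonneg hlam0pos.le]
    · rw [Complex.norm_real, Real.norm_eq_abs, abs_of_nonneg hlam0pos.le]
  -- membership of 0
  have hmem0 : (0:ℝ) ∈ compSpec (adjMat E) := by
    refine ⟨fun u => if u = v then (1:ℝ) else 0, ?_, ?_, ?_, ?_⟩
    · intro h0
      have := congrFun h0 v
      simp at this
    · intro u
      simp only [Pi.zero_apply]
      by_cases h : u = v <;> simp [h]
    · intro u
      simp only [Pi.zero_apply, Pi.sub_apply, Pi.smul_apply, zero_smul, smul_eq_mul, sub_zero]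
      exact adj_mulVec_nonneg E _ (fun w => by by_cases h : w = v <;> simp [h]) u
    · unfold dotProduct
      refine Finset.sum_eq_zero fun u _ => ?_
      by_cases h : u = v
      · subst h
        have h1 : P 1 ≠ v := fun h => one_ne_zero (hP h)
        have h2 : Q 1 ≠ v := fun h => one_ne_zero (hQ (h.trans hvQ))
        have hmv0 : (adjMat E).mulVec (fun u => if u = v then (1:ℝ) else 0) v = 0 := by
          rw [hmvv]
          simp [h1, h2]
        simp [hmv0]
      · simp [h]
  -- membership of 1 : indicator of the cycle through P and R
  have hmem1 : (1:ℝ) ∈ compSpec (adjMat E) := by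
    set y : V → ℝ := fun u => if (∃ i, u = P i) ∨ (∃ j, u = R j) then (1:ℝ) else 0 with hydef
    have hyv : y v = 1 := by rw [hydef]; simp only []; rw [if_pos (Or.inl ⟨0, rfl⟩)]
    have hynn : ∀ u, 0 ≤ y u := by
      intro u; rw [hydef]; simp only []; split <;> norm_num
    have hyQ1 : y (Q 1) = 0 := by
      rw [hydef]; simp only []
      rw [if_neg]
      rintro (⟨i, hi⟩ | ⟨j, hj⟩)
      · rcases hPQ i 1 hi.symm with ⟨_, h1⟩ | ⟨_, h1⟩
        · exact one_ne_zero h1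
        · exact h1Q h1
      · rcases hQR 1 j hj with ⟨h1, _⟩ | ⟨h1, _⟩
        · exact one_ne_zero h1
        · exact h1Q h1
    have hcyc : ∀ u, ((∃ i, u = P i) ∨ (∃ j, u = R j)) → (adjMat E).mulVec y u = 1 := by
      intro u hu
      by_cases huv : u = v
      · subst huv
        rw [hmvv y, hyQ1, add_zero, hydef]
        simp only []
        rw [if_pos (Or.inl ⟨1, rfl⟩)]
      · rcases hu with ⟨i, rfl⟩ | ⟨j, rfl⟩
        · by_cases hil : i = Fin.last (a + 1)
          · subst hil
            have hedge : E (P (Fin.last (a + 1))) (R (0 : Fin (c+1)).succ) := by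
              refine (hE _ _).2 (Or.inr (Or.inr ⟨0, ?_, rfl⟩))
              rw [Fin.castSucc_zero, hPlR]
            rw [hmv y _ _ huv hedge, hydef]
            simp only []
            rw [if_pos (Or.inr ⟨_, rfl⟩)]
          · obtain ⟨j, hj⟩ := Fin.exists_castSucc_eq.mpr hil
            have hedge : E (P i) (P j.succ) := (hE _ _).2 (Or.inl ⟨j, by rw [hj], rfl⟩)
            rw [hmv y _ _ huv hedge, hydef]
            simp only []
            rw [if_pos (Or.inl ⟨_, rfl⟩)]
        · have hjl : j ≠ Fin.last (c + 1) := fun h => huv (by rw [h, ← hvR])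
          obtain ⟨k, hk⟩ := Fin.exists_castSucc_eq.mpr hjl
          have hedge : E (R j) (R k.succ) := (hE _ _).2 (Or.inr (Or.inr ⟨k, by rw [hk], rfl⟩))
          rw [hmv y _ _ huv hedge, hydef]
          simp only []
          rw [if_pos (Or.inr ⟨_, rfl⟩)]
    have hslack : ∀ u, 0 ≤ ((adjMat E).mulVec y - (1:ℝ) • y) u := by
      intro u
      simp only [Pi.sub_apply, Pi.smul_apply, one_smul]
      by_cases hu : (∃ i, u = P i) ∨ (∃ j, u = R j)
      · rw [hcyc u hu, hydef]; simp only []; rw [if_pos hu]; norm_num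
      · have : y u = 0 := by rw [hydef]; simp only []; rw [if_neg hu]
        rw [this, sub_zero]
        exact adj_mulVec_nonneg E _ hynn u
    refine ⟨y, ?_, hynn, hslack, ?_⟩
    · intro h0
      have := congrFun h0 v
      rw [hyv] at this
      simp at this
    · unfold dotProduct
      refine Finset.sum_eq_zero fun u _ => ?_
      by_cases hu : (∃ i, u = P i) ∨ (∃ j, u = R j)
      · have : ((adjMat E).mulVec y - (1:ℝ) • y) u = 0 := by
          simp only [Pi.sub_apply, Pi.smul_apply, one_smul]
          rw [hcyc u hu, hydef]
          simp only []
          rw [if_pos hu]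
          norm_num
        rw [this, mul_zero]
      · have : y u = 0 := by rw [hydef]; simp only []; rw [if_neg hu]
        rw [this, zero_mul]
  -- membership of lam0
  have hmeml : lam0 ∈ compSpec (adjMat E) := by
    refine ⟨xs, ?_, fun u => (hxspos u).le, ?_, ?_⟩
    · intro h0
      have := congrFun h0 v
      simp only [Pi.zero_apply] at this
      exact (hxspos v).ne' this
    · rw [hxse, sub_self]
    · rw [hxse, sub_self, dotProduct_zero]
  -- the subset direction
  have hsub : ∀ lam ∈ compSpec (adjMat E), lam = 0 ∨ lam = 1 ∨ lam = rho E := by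
    rintro lam ⟨x, hx0, hxnn, hslack, hdot⟩
    have hxnn' : ∀ u, 0 ≤ x u := fun u => by simpa using hxnn u
    have hsl : ∀ u, lam * x u ≤ (adjMat E).mulVec x u := fun u => by
      have := hslack u
      simp only [Pi.sub_apply, Pi.smul_apply, smul_eq_mul, Pi.zero_apply] at this
      linarith
    have hcomp : ∀ u, x u ≠ 0 → (adjMat E).mulVec x u = lam * x u := by
      intro u hu
      have hterm : ∀ w ∈ Finset.univ,
          0 ≤ x w * ((adjMat E).mulVec x w - lam * x w) := fun w _ =>
        mul_nonneg (hxnn' w) (by linarith [hsl w])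
      have hzero := (Finset.sum_eq_zero_iff_of_nonneg hterm).1 ?_ u (Finset.mem_univ u)
      · rcases mul_eq_zero.1 hzero with h | h
        · exact absurd h hu
        · linarith
      · rw [← hdot]
        unfold dotProduct
        exact Finset.sum_congr rfl fun w _ => by
          simp only [Pi.sub_apply, Pi.smul_apply, smul_eq_mul]
    obtain ⟨u0, hu0⟩ := Function.ne_iff.1 hx0
    have hu0pos : 0 < x u0 := (hxnn' u0).lt_of_ne (Ne.symm hu0)
    have hlamnn : 0 ≤ lam := by
      have h1 : 0 ≤ (adjMat E).mulVec x u0 := adj_mulVec_nonneg E x hxnn' u0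
      rw [hcomp u0 hu0] at h1
      by_contra hneg
      push_neg at hneg
      nlinarith
    rcases eq_or_lt_of_le hlamnn with h0 | hlampos
    · exact Or.inl h0.symm
    have hstep : ∀ u w, u ≠ v → E u w → x u ≠ 0 → x w = lam * x u ∧ x w ≠ 0 := by
      intro u w hu hw hxu
      have h1 : x w = lam * x u := by rw [← hmv x u w hu hw, hcomp u hxu]
      refine ⟨h1, ?_⟩
      rw [h1]
      exact (mul_pos hlampos ((hxnn' u).lt_of_ne (Ne.symm hxu))).ne'
    by_cases hfull : x v ≠ 0 ∧ x (P 1) ≠ 0 ∧ x (Q 1) ≠ 0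
    · -- full support: lam is the spectral radius
      obtain ⟨hxv, hxP1, hxQ1⟩ := hfull
      have hchainP : ∀ n (hn : n + 1 < a + 2), x (P ⟨n + 1, hn⟩) ≠ 0 := by
        intro n
        induction n with
        | zero =>
          intro hn
          have h1 : (⟨1, hn⟩ : Fin (a + 2)) = 1 := by
            rw [Fin.ext_iff, Fin.val_one]
          rw [h1]; exact hxP1
        | succ k ih =>
          intro hn
          have hk : k + 1 < a + 2 := by omega
          have hprev := ih hk
          have hklt : k + 1 < a + 1 := by omega
          set i : Fin (a + 1) := ⟨k + 1, hklt⟩ with hidef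
          have hcs : i.castSucc = (⟨k + 1, hk⟩ : Fin (a + 2)) := rfl
          have hss : i.succ = (⟨k + 2, hn⟩ : Fin (a + 2)) := rfl
          have hedge : E (P i.castSucc) (P i.succ) := (hE _ _).2 (Or.inl ⟨i, rfl, rfl⟩)
          have hune : P i.castSucc ≠ v := by
            intro h
            have := hP h
            rw [hcs, Fin.ext_iff] at this
            simp at this
          have hres := (hstep _ _ hune hedge (by rw [hcs]; exact hprev)).2
          rw [hss] at hres
          exact hres
      have hchainQ : ∀ n (hn : n + 1 < b + 2), x (Q ⟨n + 1, hn⟩) ≠ 0 := by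
        intro n
        induction n with
        | zero =>
          intro hn
          have h1 : (⟨1, hn⟩ : Fin (b + 2)) = 1 := by
            rw [Fin.ext_iff, Fin.val_one]
          rw [h1]; exact hxQ1
        | succ k ih =>
          intro hn
          have hk : k + 1 < b + 2 := by omega
          have hprev := ih hk
          have hklt : k + 1 < b + 1 := by omega
          set i : Fin (b + 1) := ⟨k + 1, hklt⟩ with hidef
          have hcs : i.castSucc = (⟨k + 1, hk⟩ : Fin (b + 2)) := rfl
          have hss : i.succ = (⟨k + 2, hn⟩ : Fin (b + 2)) := rfl
          have hedge : E (Q i.castSucc) (Q i.succ) := (hE _ _).2 (Or.inr (Or.inl ⟨i, rfl, rfl⟩))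
          have hune : Q i.castSucc ≠ v := by
            intro h
            have := hQ (h.trans hvQ)
            rw [hcs, Fin.ext_iff] at this
            simp at this
          have hres := (hstep _ _ hune hedge (by rw [hcs]; exact hprev)).2
          rw [hss] at hres
          exact hres
      have hsuppP : ∀ i : Fin (a + 2), x (P i) ≠ 0 := by
        intro i
        by_cases hi : i = 0
        · rw [hi, ← hvdef]; exact hxv
        · have hival : i.val ≠ 0 := fun h => hi (Fin.ext h)
          obtain ⟨m, hm⟩ := Nat.exists_eq_succ_of_ne_zero hival
          have hmlt : m + 1 < a + 2 := by have := i.isLt; omega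
          have : i = ⟨m + 1, hmlt⟩ := Fin.ext hm
          rw [this]
          exact hchainP m hmlt
      have hR0 : x (R 0) ≠ 0 := by
        rw [← hPlR]
        exact hsuppP _
      have hchainR : ∀ n (hn : n < c + 2), x (R ⟨n, hn⟩) ≠ 0 := by
        intro n
        induction n with
        | zero => intro hn; exact hR0
        | succ k ih =>
          intro hn
          have hk : k < c + 2 := by omega
          have hprev := ih hk
          have hklt : k < c + 1 := by omega
          set i : Fin (c + 1) := ⟨k, hklt⟩ with hidef
          have hcs : i.castSucc = (⟨k, hk⟩ : Fin (c + 2)) := rfl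
          have hss : i.succ = (⟨k + 1, hn⟩ : Fin (c + 2)) := rfl
          have hedge : E (R i.castSucc) (R i.succ) := (hE _ _).2 (Or.inr (Or.inr ⟨i, rfl, rfl⟩))
          have hune : R i.castSucc ≠ v := by
            intro h
            have := hR (h.trans hvR)
            rw [hcs, Fin.ext_iff] at this
            simp only [Fin.val_last] at this
            omega
          have hres := (hstep _ _ hune hedge (by rw [hcs]; exact hprev)).2
          rw [hss] at hres
          exact hres
      have hall : ∀ u, x u ≠ 0 := by
        intro u
        have hu : u ∈ Set.range P ∪ Set.range Q ∪ Set.range R := by rw [hcov]; trivial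
        rcases hu with (⟨i, rfl⟩ | ⟨i, rfl⟩) | ⟨i, rfl⟩
        · exact hsuppP i
        · by_cases hi : i = 0
          · rw [hi, ← hvQ]; exact hxv
          · have hival : i.val ≠ 0 := fun h => hi (Fin.ext h)
            obtain ⟨m, hm⟩ := Nat.exists_eq_succ_of_ne_zero hival
            have hmlt : m + 1 < b + 2 := by have := i.isLt; omega
            have : i = ⟨m + 1, hmlt⟩ := Fin.ext hm
            rw [this]
            exact hchainQ m hmlt
        · have : i = ⟨i.val, i.isLt⟩ := Fin.ext rfl
          rw [this]
          exact hchainR i.val i.isLt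
      have heq : (adjMat E).mulVec x = lam • x := by
        funext u
        rw [Pi.smul_apply, smul_eq_mul]
        exact hcomp u (hall u)
      have hxpos : ∀ u, 0 < x u := fun u => (hxnn' u).lt_of_ne (Ne.symm (hall u))
      have hle1 : lam ≤ lam0 :=
        ratio_bound (adjMat E) hAnn x xs hxspos u0 hu0pos lam lam0
          (fun i => le_of_eq (by rw [heq]; simp)) hxse
      have hle2 : lam0 ≤ lam :=
        ratio_bound (adjMat E) hAnn xs x hxpos v (hxspos v) lam0 lam
          (fun i => le_of_eq (by rw [hxse]; simp)) heq
      exact Or.inr (Or.inr (by rw [hrho]; exact le_antisymm hle1 hle2))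
    · -- not full support: lam = 1
      have hnext : ∀ u, x u ≠ 0 → ∃ w, x w = lam * x u := by
        intro u hu
        by_cases huv : u = v
        · subst huv
          have hPQ1 : x (P 1) = 0 ∨ x (Q 1) = 0 := by
            by_contra hc
            push_neg at hc
            exact hfull ⟨hu, hc.1, hc.2⟩
          have hsum : x (P 1) + x (Q 1) = lam * x v := by
            rw [← hmvv x, hcomp v hu]
          rcases hPQ1 with h | h
          · exact ⟨Q 1, by rw [← hsum, h, zero_add]⟩
          · exact ⟨P 1, by rw [← hsum, h, add_zero]⟩
        · obtain ⟨w, hw⟩ := hex u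
          exact ⟨w, (hstep u w huv hw hu).1⟩
      choose! g hg using hnext
      have hit : ∀ n, x (g^[n] u0) = lam ^ n * x u0 := by
        intro n
        induction n with
        | zero => simp
        | succ n ih =>
          rw [Function.iterate_succ_apply']
          have hne : x (g^[n] u0) ≠ 0 := by
            rw [ih]
            exact (mul_pos (pow_pos hlampos n) hu0pos).ne'
          rw [hg _ hne, ih, pow_succ]
          ring
      obtain ⟨m, n, hmn, hmeq⟩ := Finite.exists_ne_map_eq_of_infinite (fun n => g^[n] u0)
      have hpow : lam ^ m = lam ^ n := by
        have := congrArg x hmeq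
        rw [hit m, hit n] at this
        exact mul_right_cancel₀ hu0 this
      have key : ∀ p q : ℕ, p < q → lam ^ p = lam ^ q → lam = 1 := by
        intro p q hpq hpows
        have hq : q = p + (q - p) := by omega
        rw [hq, pow_add] at hpows
        have hk : lam ^ (q - p) = 1 := by
          have h2 : lam ^ p * lam ^ (q - p) = lam ^ p * 1 := by
            rw [mul_one]; exact hpows.symm
          exact mul_left_cancel₀ (pow_ne_zero p hlampos.ne') h2
        have hk0 : q - p ≠ 0 := by omega
        rcases lt_trichotomy lam 1 with h | h | h
        · exact absurd hk (by nlinarith [pow_lt_one₀ hlampos.le h hk0])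
        · exact h
        · exact absurd hk (by nlinarith [one_lt_pow₀ h hk0])
      rcases hmn.lt_or_gt with hlt | hlt
      · exact Or.inr (Or.inl (key m n hlt hpow))
      · exact Or.inr (Or.inl (key n m hlt hpow.symm))
  -- assembly
  have hset : compSpec (adjMat E) = {0, 1, rho E} := by
    ext lam
    simp only [Set.mem_insert_iff, Set.mem_singleton_iff]
    constructor
    · exact fun h => hsub lam h
    · rintro (rfl | rfl | rfl)
      · exact hmem0
      · exact hmem1
      · rw [hrho]; exact hmeml
  refine ⟨hset, by rw [hrho]; exact hlam1, ?_⟩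
  rw [hset]
  refine Set.ncard_eq_three.mpr ⟨0, 1, rho E, by norm_num, ?_, ?_, rfl⟩
  · rw [hrho]; exact (by linarith : (0:ℝ) < lam0).ne
  · rw [hrho]; exact hlam1.ne

/-- the `θ(a,b,c)` digraph has complementarity spectrum `{0, 1, ρ}` with
`ρ > 1`, hence exactly three complementarity eigenvalues. -/
theorem stmt15 {V : Type*} [Fintype V] (E : V → V → Prop) (a b c : ℕ)
    (hab : a ≤ b) (hb : 0 < b) (h : IsThetaDigraph E a b c) :
    compSpec (adjMat E) = {0, 1, rho E} ∧ 1 < rho E ∧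
      (compSpec (adjMat E)).ncard = 3 := by
  obtain ⟨P, Q, R, hP, hQ, hR, hPQ0, hQR0, hPl, hQl, hPQ, hPR, hQR, hcov, hEdge⟩ := h
  exact theta_core hab hb hP hQ hR hPQ0 hQR0 hPl hQl hPQ hPR hQR hcov hEdge
end
end
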